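/- arXiv:2507.10329 — 6 statements merged into one kernel-verified Lean document; each statement's English description precedes it below -/
import Mathlib

section
/- Let Ω be a probability space and f : Ω → ℂ an integrable random variable such that f(ω) ≠ 0 for all ω, and such that for any ω₁, ω₂ ∈ Ω the angle between f(ω₁) and f(ω₂), considered as nonzero vectors in ℝ² = ℂ, does not exceed θ for some 0 ≤ θ < 2π/3. Then |∫_Ω f dP| ≥ cos(θ/2) · ∫_Ω |f| dP. -/
open MeasureTheory

/-- The angle between two complex numbers viewed as vectors in ℝ² = ℂ:
the unique value in [0, π] whose cosine is Re(u * conj v)/(|u| |v|). -/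
noncomputable def cangle (u v : ℂ) : ℝ :=
  Real.arccos ((u * starRingEnd ℂ v).re / (‖u‖ * ‖v‖))

private lemma cangle_eq (v w : ℂ) (hv : v ≠ 0) (hw : w ≠ 0) :
    cangle v w = Real.arccos (Real.cos (v.arg - w.arg)) := by
  unfold cangle
  congr 1
  rw [Real.cos_sub, Complex.cos_arg hv, Complex.sin_arg, Complex.cos_arg hw, Complex.sin_arg]
  have h1 : ‖v‖ ≠ 0 := by simpa using hv
  have h2 : ‖w‖ ≠ 0 := by simpa using hw
  simp only [Complex.mul_re, Complex.conj_re, Complex.conj_im]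
  field_simp
  ring

private lemma arccos_cos_abs {x : ℝ} (h : |x| ≤ Real.pi) : Real.arccos (Real.cos x) = |x| := by
  rw [← Real.cos_abs]; exact Real.arccos_cos (abs_nonneg x) h

private lemma exp_re_aux (x : ℝ) : (Complex.exp ((x : ℂ) * Complex.I)).re = Real.cos x := by
  simp [Complex.exp_mul_I, Complex.cos_ofReal_re]

theorem stmt_0 {Ω : Type*} [MeasureSpace Ω] [IsProbabilityMeasure (volume : Measure Ω)]
    (f : Ω → ℂ) (hf : Integrable f) (hne : ∀ ω, f ω ≠ 0)
    (θ : ℝ) (hθ0 : 0 ≤ θ) (hθ : θ < 2 * Real.pi / 3)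
    (hangle : ∀ ω₁ ω₂, cangle (f ω₁) (f ω₂) ≤ θ) :
    Real.cos (θ / 2) * ∫ ω, ‖f ω‖ ≤ ‖∫ ω, f ω‖ := by
  have hπ := Real.pi_pos
  have hΩ : Nonempty Ω := by
    by_contra h
    rw [not_nonempty_iff] at h
    have h1 : (volume : Measure Ω) Set.univ = 1 := measure_univ
    rw [Set.univ_eq_empty_iff.mpr h, measure_empty] at h1
    exact zero_ne_one h1
  obtain ⟨ω₀⟩ := hΩ
  set u : ℂ := ((‖f ω₀‖⁻¹ : ℝ) : ℂ) * f ω₀ with hu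
  have habsf0 : ‖f ω₀‖ ≠ 0 := by simpa using hne ω₀
  have hu1 : ‖u‖ = 1 := by
    rw [hu, norm_mul, Complex.norm_real, norm_inv, norm_norm]
    field_simp
  have hune : u ≠ 0 := by
    intro h; rw [h] at hu1; simp at hu1
  set z : Ω → ℂ := fun ω => f ω * starRingEnd ℂ u with hz
  have hzne : ∀ ω, z ω ≠ 0 := fun ω =>
    mul_ne_zero (hne ω) (by simpa using hune)
  have habsz : ∀ ω, ‖z ω‖ = ‖f ω‖ := by
    intro ω; simp only [hz]; rw [norm_mul, Complex.norm_conj, hu1, mul_one]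
  set g : Ω → ℝ := fun ω => (z ω).arg with hg
  have hC : u * starRingEnd ℂ u = 1 := by
    rw [Complex.mul_conj, Complex.normSq_eq_norm_sq, hu1]; norm_num
  have hcan : ∀ ω₁ ω₂, Real.arccos (Real.cos (g ω₁ - g ω₂)) ≤ θ := by
    intro ω₁ ω₂
    have heq : cangle (z ω₁) (z ω₂) = cangle (f ω₁) (f ω₂) := by
      unfold cangle
      rw [habsz, habsz]
      congr 3
      simp only [hz, map_mul, Complex.conj_conj]
      linear_combination (f ω₁ * starRingEnd ℂ (f ω₂)) * hC
    have := hangle ω₁ ω₂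
    rw [← heq, cangle_eq _ _ (hzne ω₁) (hzne ω₂)] at this
    exact this
  have hg0 : g ω₀ = 0 := by
    have key : z ω₀ = ((‖f ω₀‖ : ℝ) : ℂ) := by
      simp only [hz, hu, map_mul, Complex.conj_ofReal]
      rw [show f ω₀ * (((‖f ω₀‖⁻¹ : ℝ) : ℂ) * starRingEnd ℂ (f ω₀))
            = ((‖f ω₀‖⁻¹ : ℝ) : ℂ) * (f ω₀ * starRingEnd ℂ (f ω₀)) by ring]
      rw [Complex.mul_conj, Complex.normSq_eq_norm_sq]
      have hcne : ((‖f ω₀‖ : ℝ) : ℂ) ≠ 0 := by exact_mod_cast habsf0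
      push_cast
      field_simp
    simp only [hg]
    rw [key, Complex.arg_ofReal_of_nonneg (norm_nonneg _)]
  have hgθ : ∀ ω, |g ω| ≤ θ := by
    intro ω
    have h1 := hcan ω ω₀
    rw [hg0, sub_zero, arccos_cos_abs (Complex.abs_arg_le_pi (z ω))] at h1
    exact h1
  have hdiff : ∀ ω₁ ω₂, |g ω₁ - g ω₂| ≤ θ := by
    intro ω₁ ω₂
    by_cases hle : |g ω₁ - g ω₂| ≤ Real.pi
    · have := hcan ω₁ ω₂
      rwa [arccos_cos_abs hle] at this
    · exfalso
      push_neg at hle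
      have hb1 := abs_le.mp (hgθ ω₁)
      have hb2 := abs_le.mp (hgθ ω₂)
      have h2θ : |g ω₁ - g ω₂| ≤ 2 * θ :=
        abs_sub_le_iff.mpr ⟨by linarith, by linarith⟩
      set x := |g ω₁ - g ω₂| with hx
      have hc : Real.cos (g ω₁ - g ω₂) = Real.cos (2 * Real.pi - x) := by
        rw [← Real.cos_abs, ← hx,
          show (2 * Real.pi - x) = -(x - 2 * Real.pi) by ring,
          Real.cos_neg, Real.cos_sub_two_pi]
      have h1 := hcan ω₁ ω₂
      rw [hc, Real.arccos_cos (by linarith) (by linarith)] at h1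
      linarith
  have hbdd : BddBelow (Set.range g) := ⟨-θ, by
    rintro x ⟨ω, rfl⟩
    linarith [(abs_le.mp (hgθ ω)).1]⟩
  have hner : (Set.range g).Nonempty := ⟨g ω₀, ⟨ω₀, rfl⟩⟩
  set m := sInf (Set.range g) with hm
  set φ := m + θ / 2 with hφ
  have hgφ : ∀ ω, |g ω - φ| ≤ θ / 2 := by
    intro ω
    have h1 : m ≤ g ω := csInf_le hbdd ⟨ω, rfl⟩
    have h2 : g ω - θ ≤ m := le_csInf hner (by
      rintro x ⟨ω', rfl⟩
      linarith [(abs_le.mp (hdiff ω ω')).2])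
    exact abs_le.mpr ⟨by linarith, by linarith⟩
  set c : ℂ := starRingEnd ℂ u * Complex.exp (((-φ : ℝ) : ℂ) * Complex.I) with hcdef
  have hc1 : ‖c‖ = 1 := by
    rw [hcdef, norm_mul, Complex.norm_conj, hu1, Complex.norm_exp_ofReal_mul_I, mul_one]
  have hre : ∀ ω, (f ω * c).re = ‖f ω‖ * Real.cos (g ω - φ) := by
    intro ω
    have h2 := Complex.norm_mul_exp_arg_mul_I (z ω)
    rw [habsz] at h2
    have h1 : f ω * c = ((‖f ω‖ : ℝ) : ℂ) *
        Complex.exp (((g ω - φ : ℝ) : ℂ) * Complex.I) := by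
      calc f ω * c = z ω * Complex.exp (((-φ : ℝ) : ℂ) * Complex.I) := by
            simp only [hz, hcdef]; ring
        _ = ((‖f ω‖ : ℝ) : ℂ) *
            (Complex.exp (((g ω : ℝ) : ℂ) * Complex.I) *
             Complex.exp (((-φ : ℝ) : ℂ) * Complex.I)) := by
            rw [← h2]; ring
        _ = _ := by rw [← Complex.exp_add]; push_cast; ring_nf
    rw [h1, Complex.re_ofReal_mul]
    congr 1
    exact exp_re_aux (g ω - φ)
  have hre2 : ∀ ω, Real.cos (θ / 2) * ‖f ω‖ ≤ (f ω * c).re := by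
    intro ω
    rw [hre ω]
    have hcos : Real.cos (θ / 2) ≤ Real.cos (g ω - φ) := by
      have := Real.cos_le_cos_of_nonneg_of_le_pi (abs_nonneg (g ω - φ))
        (by linarith : θ / 2 ≤ Real.pi) (hgφ ω)
      rwa [Real.cos_abs] at this
    have hnorm : ‖f ω‖ = ‖f ω‖ := rfl
    rw [hnorm]
    nlinarith [norm_nonneg (f ω)]
  have hint1 : Integrable (fun ω => (f ω * c).re) := (hf.mul_const c).re
  have hint2 : Integrable (fun ω => ‖f ω‖) := hf.norm
  calc Real.cos (θ / 2) * ∫ ω, ‖f ω‖ = ∫ ω, Real.cos (θ / 2) * ‖f ω‖ :=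
        (integral_const_mul _ _).symm
    _ ≤ ∫ ω, (f ω * c).re := integral_mono (hint2.const_mul _) hint1 hre2
    _ = (∫ ω, f ω * c).re := integral_re (hf.mul_const c)
    _ ≤ ‖∫ ω, f ω * c‖ := Complex.re_le_norm _
    _ = ‖(∫ ω, f ω) * c‖ := by rw [integral_mul_const]
    _ = ‖∫ ω, f ω‖ := by rw [norm_mul, hc1, mul_one]
end

section
/- Let v ∈ ℂ be nonzero and u ∈ ℂ satisfy |u| ≤ (sin θ)|v| for some 0 ≤ θ < π/2. Then v + u ≠ 0 and the angle between v and v + u, considered as vectors in ℝ² = ℂ, does not exceed θ. -/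
theorem stmt_1 (v u : ℂ) (hv : v ≠ 0) (θ : ℝ) (hθ0 : 0 ≤ θ) (hθ : θ < Real.pi / 2)
    (hu : ‖u‖ ≤ Real.sin θ * ‖v‖) :
    v + u ≠ 0 ∧ cangle v (v + u) ≤ θ := by
  have hr : 0 < ‖v‖ := norm_pos_iff.mpr hv
  have hc : 0 < Real.cos θ := Real.cos_pos_of_mem_Ioo ⟨by linarith [Real.pi_pos], hθ⟩
  have hs0 : 0 ≤ Real.sin θ := Real.sin_nonneg_of_nonneg_of_le_pi hθ0
    (by linarith [Real.pi_pos])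
  have hsc : Real.sin θ ^ 2 + Real.cos θ ^ 2 = 1 := Real.sin_sq_add_cos_sq θ
  have hs1 : Real.sin θ < 1 := by nlinarith
  have hum : ‖u‖ < ‖v‖ := by nlinarith
  have hw : v + u ≠ 0 := by
    intro h
    have h2 : u = -v := by linear_combination h
    rw [h2, norm_neg] at hum
    exact lt_irrefl _ hum
  refine ⟨hw, ?_⟩
  set r := ‖v‖ with hr'
  set m := ‖u‖ with hm'
  set W := ‖v + u‖ with hW'
  have hWpos : 0 < W := norm_pos_iff.mpr hw
  set A := (v * starRingEnd ℂ u).re with hA'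
  set B := (v * starRingEnd ℂ u).im with hB'
  have hAB : A ^ 2 + B ^ 2 = r ^ 2 * m ^ 2 := by
    have h1 := Complex.sq_norm (v * starRingEnd ℂ u)
    rw [Complex.normSq_apply, norm_mul, Complex.norm_conj] at h1
    rw [hA', hB', hr', hm']
    linear_combination -h1
  have hre : (v * starRingEnd ℂ (v + u)).re = r ^ 2 + A := by
    rw [map_add, mul_add, Complex.add_re, Complex.mul_conj, Complex.ofReal_re,
      Complex.normSq_eq_norm_sq, ← hA', ← hr']
  have hW2 : W ^ 2 = r ^ 2 + 2 * A + m ^ 2 := by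
    rw [hW', Complex.sq_norm, Complex.normSq_add, ← Complex.sq_norm, ← Complex.sq_norm,
      ← hA', ← hr', ← hm']
    ring
  -- key: A ≥ -r*m
  have hAbd : |A| ≤ r * m := by
    have := Complex.abs_re_le_norm (v * starRingEnd ℂ u)
    simpa [norm_mul, ← hA'] using this
  have hApos : 0 < r ^ 2 + A := by
    have := abs_le.mp hAbd
    nlinarith
  -- key inequality: cos θ * (r * W) ≤ r^2 + A
  have hkey : Real.cos θ * (r * W) ≤ r ^ 2 + A := by
    have hsq : (Real.cos θ * (r * W)) ^ 2 ≤ (r ^ 2 + A) ^ 2 := by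
      have hm2 : m ^ 2 ≤ (Real.sin θ * r) ^ 2 := by nlinarith [norm_nonneg u]
      have hB2 : B ^ 2 ≤ r ^ 2 * (Real.sin θ * r) ^ 2 - A ^ 2 := by
        have := mul_le_mul_of_nonneg_left hm2 (sq_nonneg r)
        linarith
      calc (Real.cos θ * (r * W)) ^ 2 = Real.cos θ ^ 2 * r ^ 2 * (r ^ 2 + 2 * A + m ^ 2) := by
            rw [← hW2]; ring
        _ ≤ (r ^ 2 + A) ^ 2 := by nlinarith [sq_nonneg (Real.sin θ ^ 2 * r ^ 2 + A)]
    nlinarith [mul_pos hc (mul_pos hr hWpos)]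
  -- conclude
  have hx1 : (v * starRingEnd ℂ (v + u)).re / (r * W) ≤ 1 := by
    rw [hre, div_le_one (by positivity)]
    have := Complex.abs_re_le_norm (v * starRingEnd ℂ (v + u))
    rw [hre, norm_mul, Complex.norm_conj, ← hr', ← hW'] at this
    exact (abs_le.mp this).2
  have hcle : Real.cos θ ≤ (v * starRingEnd ℂ (v + u)).re / (r * W) := by
    rw [hre, le_div_iff₀ (by positivity)]
    linarith
  unfold cangle
  rw [← hr', ← hW']
  by_contra hcon
  push_neg at hcon
  have h1 : Real.cos (Real.arccos ((v * starRingEnd ℂ (v + u)).re / (r * W))) < Real.cos θ := by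
    apply Real.cos_lt_cos_of_nonneg_of_le_pi hθ0 (Real.arccos_le_pi _) hcon
  rw [Real.cos_arccos (by linarith [hc.le]) hx1] at h1
  linarith
end

section
/- For all real Δ ≥ 3 and γ ≥ 3, the inequality (1 + 1/(6Δ)) · (6/(γ³Δ² − 2)) · (1/cos(1/Δ)) ≤ sin(1/(2Δ²)) holds. -/
theorem stmt_9 (Δ γ : ℝ) (hΔ : 3 ≤ Δ) (hγ : 3 ≤ γ) :
    (1 + 1 / (6 * Δ)) * (6 / (γ ^ 3 * Δ ^ 2 - 2)) * (1 / Real.cos (1 / Δ)) ≤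
      Real.sin (1 / (2 * Δ ^ 2)) := by
  have hΔ0 : (0:ℝ) < Δ := by linarith
  have h9 : (9:ℝ) ≤ Δ ^ 2 := by nlinarith
  have hγ3 : (27:ℝ) ≤ γ ^ 3 := by nlinarith [sq_nonneg γ, sq_nonneg (γ-3)]
  have hden : (0:ℝ) < 27 * Δ ^ 2 - 2 := by nlinarith
  have hden2 : (0:ℝ) < γ ^ 3 * Δ ^ 2 - 2 := by nlinarith
  have hxle : 1 / Δ ≤ 1 / 3 := by
    apply one_div_le_one_div_of_le <;> linarith
  have hx0 : (0:ℝ) < 1 / Δ := by positivity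
  have hcos : (17:ℝ)/18 ≤ Real.cos (1 / Δ) := by
    have h := Real.one_sub_sq_div_two_le_cos (x := 1 / Δ)
    nlinarith [sq_nonneg (1/Δ)]
  have hcos0 : (0:ℝ) < Real.cos (1 / Δ) := by linarith
  -- sin lower bound
  set y : ℝ := 1 / (2 * Δ ^ 2) with hy
  have hy0 : 0 < y := by positivity
  have hyle : y ≤ 1 / 18 := by
    rw [hy]; rw [div_le_div_iff₀ (by positivity) (by norm_num)]; nlinarith
  have hsin : y - y ^ 3 / 4 ≤ Real.sin y :=
    by have := Real.sin_gt_sub_cube hy0; nlinarith [pow_pos hy0 3]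
  have hsin2 : (1295:ℝ)/1296 * y ≤ Real.sin y := by
    nlinarith [sq_nonneg y, hy0.le, pow_le_pow_left₀ hy0.le hyle 3]
  refine le_trans ?_ hsin2
  -- bound the three factors
  have f1 : 1 + 1 / (6 * Δ) ≤ 19/18 := by
    have : 1 / (6 * Δ) ≤ 1 / 18 := by
      apply one_div_le_one_div_of_le <;> linarith
    linarith
  have f2 : 6 / (γ ^ 3 * Δ ^ 2 - 2) ≤ 6 / (27 * Δ ^ 2 - 2) := by
    apply div_le_div_of_nonneg_left (by norm_num) hden
    nlinarith
  have f3 : 1 / Real.cos (1 / Δ) ≤ 18/17 := by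
    rw [div_le_div_iff₀ hcos0 (by norm_num)]; linarith
  have p1 : (0:ℝ) ≤ 1 + 1 / (6 * Δ) := by positivity
  have p2 : (0:ℝ) ≤ 6 / (γ ^ 3 * Δ ^ 2 - 2) := by positivity
  have p3 : (0:ℝ) ≤ 1 / Real.cos (1 / Δ) := by positivity
  calc (1 + 1 / (6 * Δ)) * (6 / (γ ^ 3 * Δ ^ 2 - 2)) * (1 / Real.cos (1 / Δ))
      ≤ 19/18 * (6 / (27 * Δ ^ 2 - 2)) * (18/17) := by
        apply mul_le_mul (mul_le_mul f1 f2 p2 (by norm_num)) f3 p3 (by positivity)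
    _ ≤ 1295/1296 * y := by
        have hne : (27 * Δ ^ 2 - 2) ≠ 0 := hden.ne'
        rw [hy]
        field_simp
        nlinarith
end

section
/- For all real Δ ≥ 5 and γ ≥ 3, the inequality (1 + 1/(6Δ)) · (1 + 6/(γ³Δ² − 2)) · (1/cos(1/Δ)) ≤ 1 + 1/(3Δ) holds. -/
theorem stmt_10 (Δ γ : ℝ) (hΔ : 5 ≤ Δ) (hγ : 3 ≤ γ) :
    (1 + 1 / (6 * Δ)) * (1 + 6 / (γ ^ 3 * Δ ^ 2 - 2)) * (1 / Real.cos (1 / Δ)) ≤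
      1 + 1 / (3 * Δ) := by
  have hΔ0 : (0:ℝ) < Δ := by linarith
  have hΔ2 : (0:ℝ) < Δ ^ 2 := by positivity
  have hγ3 : 27 ≤ γ ^ 3 := by nlinarith [sq_nonneg (γ-3), sq_nonneg (γ+3)]
  have hden : 27 * Δ ^ 2 - 2 ≤ γ ^ 3 * Δ ^ 2 - 2 := by nlinarith
  have hden0 : (0:ℝ) < 27 * Δ ^ 2 - 2 := by nlinarith
  have hden0' : (0:ℝ) < γ ^ 3 * Δ ^ 2 - 2 := lt_of_lt_of_le hden0 hden
  -- cos bound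
  have hx : (1:ℝ)/Δ ≤ 1/5 := by
    apply div_le_div_of_nonneg_left (by norm_num) (by norm_num) hΔ
  have hx0 : (0:ℝ) < 1/Δ := by positivity
  have hcos_lb : 1 - (1/Δ)^2/2 ≤ Real.cos (1/Δ) := Real.one_sub_sq_div_two_le_cos
  have hq : (0:ℝ) < 1 - (1/Δ)^2/2 := by
    have : (1/Δ)^2 ≤ (1/5:ℝ)^2 := by nlinarith
    nlinarith
  have hcos0 : 0 < Real.cos (1/Δ) := lt_of_lt_of_le hq hcos_lb
  have h1 : 1 / Real.cos (1/Δ) ≤ 1 / (1 - (1/Δ)^2/2) :=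
    one_div_le_one_div_of_le hq hcos_lb
  have h2 : (6:ℝ) / (γ ^ 3 * Δ ^ 2 - 2) ≤ 6 / (27 * Δ ^ 2 - 2) :=
    div_le_div_of_nonneg_left (by norm_num) hden0 hden
  have key : (1 + 1 / (6 * Δ)) * (1 + 6 / (27 * Δ ^ 2 - 2)) * (1 / (1 - (1/Δ)^2/2)) ≤
      1 + 1 / (3 * Δ) := by
    rw [mul_one_div, div_le_iff₀ hq]
    have hne : Δ ≠ 0 := ne_of_gt hΔ0
    field_simp
    rw [one_add_div (by linarith : (0:ℝ) < Δ ^ 2 * 27 - 2).ne', mul_div_assoc', div_mul_eq_mul_div, div_le_iff₀ (by linarith)]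
    nlinarith [mul_pos (mul_pos hΔ2 hΔ2) hΔ0, mul_pos hΔ2 hΔ0, sq_nonneg (Δ-5),
      mul_nonneg (mul_nonneg hΔ2.le hΔ0.le) (sq_nonneg (Δ-5)),
      mul_nonneg hΔ2.le (sq_nonneg (Δ-5))]
  have ha : (0:ℝ) ≤ 1 + 1 / (6 * Δ) := by positivity
  have hb : (0:ℝ) ≤ 1 + 6 / (27 * Δ ^ 2 - 2) := by positivity
  calc (1 + 1 / (6 * Δ)) * (1 + 6 / (γ ^ 3 * Δ ^ 2 - 2)) * (1 / Real.cos (1 / Δ))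
      ≤ (1 + 1 / (6 * Δ)) * (1 + 6 / (27 * Δ ^ 2 - 2)) * (1 / (1 - (1/Δ)^2/2)) := by
        apply mul_le_mul
        · apply mul_le_mul_of_nonneg_left (by linarith) ha
        · exact h1
        · positivity
        · positivity
    _ ≤ 1 + 1 / (3 * Δ) := key
end

section
/- Let Ω₁, Ω₂ be probability spaces with product Ω = Ω₁ × Ω₂, let φ : Ω₁ → ℂ be integrable, let C ⊆ Ω₁ be a measurable event with P₁(C) > 0, and suppose there are constants c ≥ 1 and θ ∈ [0, 2π/3) such that: (i) φ(u) ≠ 0 for all u ∈ C and the angle between φ(u₁), φ(u₂) is at most θ for all u₁, u₂ ∈ C; (ii) |φ(u₂)| ≤ c·|φ(u₁)| for all u₁ ∈ C and u₂ ∈ Ω₁. Then ∫_{Ω₁∖C} |φ| dP₁ ≤ (c · P₁(Ω₁∖C) / P₁(C)) · (1/cos(θ/2)) · |∫_C φ dP₁|. -/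
open MeasureTheory

private lemma cangle_ratio_mem (x y : ℂ) :
    (x * starRingEnd ℂ y).re / (‖x‖ * ‖y‖) ∈ Set.Icc (-1:ℝ) 1 := by
  rcases eq_or_ne (‖x‖ * ‖y‖) 0 with h | h
  · simp [h]
  · have hpos : 0 < ‖x‖ * ‖y‖ :=
      lt_of_le_of_ne (mul_nonneg (norm_nonneg _) (norm_nonneg _)) (Ne.symm h)
    have hle : |(x * starRingEnd ℂ y).re| ≤ ‖x‖ * ‖y‖ := by
      calc |(x * starRingEnd ℂ y).re| ≤ ‖x * starRingEnd ℂ y‖ :=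
            Complex.abs_re_le_norm _
        _ = ‖x‖ * ‖y‖ := by
            rw [norm_mul]; simp
    constructor
    · rw [le_div_iff₀ hpos] at *
      nlinarith [abs_le.mp hle]
    · rw [div_le_one hpos]
      exact (abs_le.mp hle).2

private lemma cos_cangle (x y : ℂ) :
    Real.cos (cangle x y) = (x * starRingEnd ℂ y).re / (‖x‖ * ‖y‖) :=
  Real.cos_arccos (cangle_ratio_mem x y).1 (cangle_ratio_mem x y).2

private lemma cangle_eq_abs_arg (x z : ℂ) (hx : x ≠ 0) (hz : z ≠ 0) :
    cangle x z = |(x * starRingEnd ℂ z).arg| := by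
  have hw : x * starRingEnd ℂ z ≠ 0 := mul_ne_zero hx (by simpa using hz)
  unfold cangle
  have habs : ‖x‖ * ‖z‖ = ‖x * starRingEnd ℂ z‖ := by
    rw [norm_mul]; simp
  rw [habs, ← Complex.cos_arg hw, ← Real.cos_abs]
  exact Real.arccos_cos (abs_nonneg _) (Complex.abs_arg_le_pi _)

private lemma cos_arg_sub (w₁ w₂ : ℂ) (h₁ : w₁ ≠ 0) (h₂ : w₂ ≠ 0) :
    Real.cos (w₁.arg - w₂.arg)
      = (w₁.re * w₂.re + w₁.im * w₂.im) / (‖w₁‖ * ‖w₂‖) := by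
  rw [Real.cos_sub, Complex.cos_arg h₁, Complex.cos_arg h₂, Complex.sin_arg, Complex.sin_arg]
  field_simp

private lemma cos_arg_pair (x y z : ℂ) (hx : x ≠ 0) (hy : y ≠ 0) (hz : z ≠ 0) :
    Real.cos ((x * starRingEnd ℂ z).arg - (y * starRingEnd ℂ z).arg)
      = Real.cos (cangle x y) := by
  have hz' : starRingEnd ℂ z ≠ 0 := by simpa using hz
  rw [cos_arg_sub _ _ (mul_ne_zero hx hz') (mul_ne_zero hy hz'), cos_cangle]
  have key : (x * starRingEnd ℂ z).re * (y * starRingEnd ℂ z).re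
      + (x * starRingEnd ℂ z).im * (y * starRingEnd ℂ z).im
      = (x * starRingEnd ℂ y).re * Complex.normSq z := by
    simp only [Complex.mul_re, Complex.mul_im, Complex.conj_re, Complex.conj_im,
      Complex.normSq_apply]
    ring
  have hden : ‖x * starRingEnd ℂ z‖ * ‖y * starRingEnd ℂ z‖
      = (‖x‖ * ‖y‖) * Complex.normSq z := by
    rw [norm_mul, norm_mul, Complex.normSq_eq_norm_sq]
    simp; ring
  rw [key, hden]
  have hns : Complex.normSq z ≠ 0 := (Complex.normSq_pos.mpr hz).ne'
  rw [mul_comm (‖x‖ * ‖y‖) _, mul_comm ((x * starRingEnd ℂ y).re) _,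
    mul_div_mul_left _ _ hns]

private lemma re_mul_exp (w : ℂ) (hw : w ≠ 0) (m : ℝ) :
    (w * Complex.exp (-(m:ℂ) * Complex.I)).re = ‖w‖ * Real.cos (w.arg - m) := by
  have he : Complex.exp (-(m:ℂ) * Complex.I)
      = Complex.ofReal (Real.cos m) - Complex.ofReal (Real.sin m) * Complex.I := by
    rw [show -(m:ℂ) * Complex.I = ((-m : ℝ) : ℂ) * Complex.I by push_cast; ring,
      Complex.exp_mul_I, ← Complex.ofReal_cos, ← Complex.ofReal_sin]
    rw [Real.cos_neg, Real.sin_neg]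
    push_cast
    ring
  rw [he, Real.cos_sub]
  have hre := Complex.cos_arg hw
  have him := Complex.sin_arg w
  have habs : ‖w‖ ≠ 0 := norm_ne_zero_iff.mpr hw
  have hre' : w.re = ‖w‖ * Real.cos w.arg := by
    rw [hre]; field_simp
  have him' : w.im = ‖w‖ * Real.sin w.arg := by
    rw [him]; field_simp
  simp only [Complex.mul_re, Complex.sub_re, Complex.sub_im, Complex.ofReal_re,
    Complex.ofReal_im, Complex.mul_im, Complex.I_re, Complex.I_im]
  rw [hre', him']
  ring

theorem stmt_14 {Ω₁ Ω₂ : Type*} [MeasurableSpace Ω₁] [MeasurableSpace Ω₂]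
    (P₁ : Measure Ω₁) (P₂ : Measure Ω₂)
    [IsProbabilityMeasure P₁] [IsProbabilityMeasure P₂]
    (φ : Ω₁ → ℂ) (hφ : Integrable φ P₁)
    (C : Set Ω₁) (hC : MeasurableSet C) (hCpos : 0 < P₁ C)
    (c : ℝ) (hc : 1 ≤ c) (θ : ℝ) (hθ0 : 0 ≤ θ) (hθ : θ < 2 * Real.pi / 3)
    (hne : ∀ u ∈ C, φ u ≠ 0)
    (hangle : ∀ u₁ ∈ C, ∀ u₂ ∈ C, cangle (φ u₁) (φ u₂) ≤ θ)
    (hdom : ∀ u₁ ∈ C, ∀ u₂, ‖φ u₂‖ ≤ c * ‖φ u₁‖) :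
    ∫ u in Cᶜ, ‖φ u‖ ∂P₁ ≤
      (c * (P₁ Cᶜ).toReal / (P₁ C).toReal) * (1 / Real.cos (θ / 2)) *
        ‖∫ u in C, φ u ∂P₁‖ := by
  have hπ : 0 < Real.pi := Real.pi_pos
  have hθπ : θ < Real.pi := by nlinarith
  obtain ⟨u₀, hu₀⟩ : C.Nonempty := nonempty_of_measure_ne_zero hCpos.ne'
  have hu0 : φ u₀ ≠ 0 := hne u₀ hu₀
  have hu0n : (0:ℝ) < ‖φ u₀‖ := norm_pos_iff.mpr hu0
  set β : Ω₁ → ℝ := fun u => (φ u * starRingEnd ℂ (φ u₀)).arg with hβ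
  have hβθ : ∀ u ∈ C, |β u| ≤ θ := by
    intro u hu
    show |(φ u * starRingEnd ℂ (φ u₀)).arg| ≤ θ
    rw [← cangle_eq_abs_arg _ _ (hne u hu) hu0]
    exact hangle u hu u₀ hu₀
  have hpair : ∀ u ∈ C, ∀ v ∈ C, |β u - β v| ≤ θ := by
    intro u hu v hv
    by_contra hlt
    push_neg at hlt
    have hcos : Real.cos (β u - β v) = Real.cos (cangle (φ u) (φ v)) :=
      cos_arg_pair _ _ _ (hne u hu) (hne v hv) hu0
    have h1 : Real.cos θ ≤ Real.cos (β u - β v) := by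
      rw [hcos]
      exact Real.cos_le_cos_of_nonneg_of_le_pi (Real.arccos_nonneg _) hθπ.le
        (hangle u hu v hv)
    rw [← Real.cos_abs (β u - β v)] at h1
    have hd2 : |β u - β v| ≤ 2 * θ := by
      have h := abs_sub (β u) (β v)
      have h1 := hβθ u hu
      have h2 := hβθ v hv
      linarith
    rcases le_or_gt (|β u - β v|) Real.pi with hle | hgt
    · have := Real.cos_lt_cos_of_nonneg_of_le_pi hθ0 hle hlt
      linarith
    · have hx : Real.cos (2 * Real.pi - |β u - β v|) = Real.cos (|β u - β v|) :=
        Real.cos_two_pi_sub _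
      have h3 : 2 * Real.pi - |β u - β v| ≤ Real.pi := by linarith
      have h4 : θ < 2 * Real.pi - |β u - β v| := by linarith
      have := Real.cos_lt_cos_of_nonneg_of_le_pi hθ0 h3 h4
      linarith
  have hSne : (β '' C).Nonempty := ⟨β u₀, u₀, hu₀, rfl⟩
  have hbddA : BddAbove (β '' C) := ⟨θ, by rintro x ⟨u, hu, rfl⟩; exact (abs_le.mp (hβθ u hu)).2⟩
  have hbddB : BddBelow (β '' C) :=
    ⟨-θ, by rintro x ⟨u, hu, rfl⟩; exact (abs_le.mp (hβθ u hu)).1⟩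
  set a := sInf (β '' C) with ha
  set b := sSup (β '' C) with hb
  set m := (a + b) / 2 with hm
  have hab : b ≤ a + θ := by
    apply csSup_le hSne
    rintro x ⟨u, hu, rfl⟩
    have hia : β u - θ ≤ a := by
      apply le_csInf hSne
      rintro y ⟨v, hv, rfl⟩
      have := (abs_le.mp (hpair u hu v hv)).2
      linarith
    linarith
  have hmem : ∀ u ∈ C, |β u - m| ≤ θ / 2 := by
    intro u hu
    have h1 : a ≤ β u := csInf_le hbddB ⟨u, hu, rfl⟩
    have h2 : β u ≤ b := le_csSup hbddA ⟨u, hu, rfl⟩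
    rw [abs_le]
    constructor <;> rw [hm] <;> linarith
  have hcos2pos : 0 < Real.cos (θ / 2) :=
    Real.cos_pos_of_mem_Ioo ⟨by linarith, by linarith⟩
  have hcosm : ∀ u ∈ C, Real.cos (θ/2) ≤ Real.cos (β u - m) := by
    intro u hu
    rw [← Real.cos_abs (β u - m)]
    exact Real.cos_le_cos_of_nonneg_of_le_pi (abs_nonneg _) (by linarith)
      (hmem u hu)
  set E : ℂ := starRingEnd ℂ (φ u₀) * Complex.exp (-(m:ℂ) * Complex.I) with hE
  have hintn : Integrable (fun u => ‖φ u‖) P₁ := hφ.norm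
  have hint2 : Integrable (fun u => φ u * E) P₁ := hφ.mul_const E
  have hptw : ∀ u ∈ C, Real.cos (θ/2) * ‖φ u₀‖ * ‖φ u‖ ≤ (φ u * E).re := by
    intro u hu
    have hw : φ u * starRingEnd ℂ (φ u₀) ≠ 0 := mul_ne_zero (hne u hu) (by simpa using hu0)
    have hre : (φ u * E).re
        = ‖φ u * starRingEnd ℂ (φ u₀)‖ * Real.cos (β u - m) := by
      rw [hE, ← mul_assoc]
      exact re_mul_exp _ hw m
    rw [hre]
    have habs : ‖φ u * starRingEnd ℂ (φ u₀)‖ = ‖φ u‖ * ‖φ u₀‖ := by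
      rw [norm_mul]; simp
    rw [habs]
    have h := hcosm u hu
    have hnn : 0 ≤ ‖φ u‖ * ‖φ u₀‖ := mul_nonneg (norm_nonneg _) (norm_nonneg _)
    nlinarith [mul_le_mul_of_nonneg_right h hnn]
  set z := ∫ u in C, φ u ∂P₁ with hz
  set A := ∫ u in C, ‖φ u‖ ∂P₁ with hA
  have hA0 : 0 ≤ A := setIntegral_nonneg hC (fun u _ => norm_nonneg _)
  have hB1 : Real.cos (θ/2) * ‖φ u₀‖ * A ≤ ∫ u in C, RCLike.re (φ u * E) ∂P₁ := by
    rw [hA, ← integral_const_mul]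
    exact setIntegral_mono_on ((hintn.const_mul _).integrableOn) (hint2.re.integrableOn) hC
      (fun u hu => by simpa [RCLike.re_to_complex] using hptw u hu)
  have hB2 : ∫ u in C, RCLike.re (φ u * E) ∂P₁ = RCLike.re (z * E) := by
    rw [integral_re (hint2.integrableOn), hz, integral_mul_const]
  have hB3 : RCLike.re (z * E) ≤ ‖z‖ * ‖φ u₀‖ := by
    have hnE : ‖E‖ = ‖φ u₀‖ := by
      rw [hE, norm_mul]
      have h1 : ‖Complex.exp (-(m:ℂ) * Complex.I)‖ = 1 := by
        rw [show -(m:ℂ) * Complex.I = ((-m:ℝ):ℂ) * Complex.I by push_cast; ring]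
        simpa using Complex.norm_exp_ofReal_mul_I (-m)
      rw [h1, mul_one]
      simp
    calc RCLike.re (z * E) ≤ ‖z * E‖ := RCLike.re_le_norm _
      _ = ‖z‖ * ‖E‖ := norm_mul _ _
      _ = ‖z‖ * ‖φ u₀‖ := by rw [hnE]
  have hB : Real.cos (θ/2) * A ≤ ‖z‖ := by
    have h := (hB1.trans (le_of_eq hB2)).trans hB3
    nlinarith [h, hu0n]
  have hPC : 0 < (P₁ C).toReal := ENNReal.toReal_pos hCpos.ne' (measure_ne_top _ _)
  set K := ∫ u in Cᶜ, ‖φ u‖ ∂P₁ with hK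
  have hKle : ∀ u₁ ∈ C, K ≤ c * (P₁ Cᶜ).toReal * ‖φ u₁‖ := by
    intro u₁ h₁
    have h := setIntegral_mono_on (hintn.integrableOn)
      integrableOn_const hC.compl
      (fun u _ => hdom u₁ h₁ u)
    rw [setIntegral_const] at h
    rw [hK]
    calc ∫ u in Cᶜ, ‖φ u‖ ∂P₁ ≤ (P₁ Cᶜ).toReal • (c * ‖φ u₁‖) := h
      _ = c * (P₁ Cᶜ).toReal * ‖φ u₁‖ := by rw [smul_eq_mul]; ring
  have hstepA : (P₁ C).toReal * K ≤ c * (P₁ Cᶜ).toReal * A := by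
    have h := setIntegral_mono_on
      integrableOn_const
      ((hintn.const_mul (c * (P₁ Cᶜ).toReal)).integrableOn) hC hKle
    rw [setIntegral_const, integral_const_mul] at h
    simpa [smul_eq_mul, ← hA, measureReal_def] using h
  have hPcc : 0 ≤ (P₁ Cᶜ).toReal := ENNReal.toReal_nonneg
  have hc0 : 0 < c := lt_of_lt_of_le one_pos hc
  have h1 : K ≤ c * (P₁ Cᶜ).toReal * A / (P₁ C).toReal := by
    rw [le_div_iff₀ hPC]; linarith [hstepA]
  have h2 : A ≤ ‖z‖ / Real.cos (θ/2) := by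
    rw [le_div_iff₀ hcos2pos]; linarith [hB]
  calc K ≤ c * (P₁ Cᶜ).toReal * A / (P₁ C).toReal := h1
    _ ≤ c * (P₁ Cᶜ).toReal * (‖z‖ / Real.cos (θ/2)) / (P₁ C).toReal := by gcongr
    _ = (c * (P₁ Cᶜ).toReal / (P₁ C).toReal) * (1 / Real.cos (θ/2)) * ‖z‖ := by ring
end

section
/- Let Ω₁, …, Ω_m be probability spaces with product Ω, and let f₁, …, fₙ : Ω → ℂ be bounded measurable random variables such that each f_i depends on at most r_i coordinates and shares a coordinate with at most Δ_i of the other functions. Set Δ = max{5, Δ₁, …, Δₙ} and μ_i = min{r_i, Δ_i + 1}. If |f_i(x)| ≤ 1 + 1/(6Δ) for all x and all i, and P(f_i ≠ 1) < (3Δ)^{-3μ_i} for all i, then ∫_Ω ∏_{i=1}^n f_i(x) dx ≠ 0. -/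
open MeasureTheory Finset

set_option linter.unusedSectionVars false

namespace S17

variable {m : ℕ} {Ω : Fin m → Type*} [∀ j, MeasureSpace (Ω j)]
  [∀ j, IsProbabilityMeasure (volume : Measure (Ω j))]

local notation "π" => (Measure.pi fun j => (volume : Measure (Ω j)))

noncomputable def mix (K : Finset (Fin m)) (y x : ∀ j, Ω j) : ∀ j, Ω j :=
  fun j => if j ∈ K then y j else x j

lemma measurable_mix (K : Finset (Fin m)) :
    Measurable (fun p : (∀ j, Ω j) × (∀ j, Ω j) => mix K p.1 p.2) := by
  apply measurable_pi_lambda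
  intro j
  by_cases h : j ∈ K
  · convert (measurable_pi_apply j).comp measurable_fst using 1; funext p; simp [mix, h]
  · convert (measurable_pi_apply j).comp measurable_snd using 1; funext p; simp [mix, h]

lemma mix_mem {K : Finset (Fin m)} {j : Fin m} (h : j ∈ K) (y x : ∀ j, Ω j) :
    mix K y x j = y j := if_pos h

lemma mix_not_mem {K : Finset (Fin m)} {j : Fin m} (h : j ∉ K) (y x : ∀ j, Ω j) :
    mix K y x j = x j := if_neg h

lemma mix_assoc (K L : Finset (Fin m)) (y u x : ∀ j, Ω j) :
    mix K y (mix L u x) = mix (K ∪ L) (mix K y u) x := by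
  funext j
  by_cases hK : j ∈ K
  · simp [mix, hK]
  · by_cases hL : j ∈ L <;> simp [mix, hK, hL]

lemma measurePreserving_mix (K : Finset (Fin m)) :
    MeasurePreserving (fun p : (∀ j, Ω j) × (∀ j, Ω j) => mix K p.1 p.2)
      (Measure.prod π π) π := by
  refine ⟨measurable_mix K, ?_⟩
  refine (Measure.pi_eq fun s hs => ?_).symm
  have hpre : (fun p : (∀ j, Ω j) × (∀ j, Ω j) => mix K p.1 p.2) ⁻¹' (Set.pi Set.univ s)
      = (Set.pi Set.univ fun j => if j ∈ K then s j else Set.univ) ×ˢ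
        (Set.pi Set.univ fun j => if j ∈ K then Set.univ else s j) := by
    ext p
    simp only [Set.mem_preimage, Set.mem_pi, Set.mem_univ, forall_true_left, Set.mem_prod]
    constructor
    · intro h
      constructor <;> intro j <;> by_cases hj : j ∈ K <;> simp [hj] <;>
        · have := h j; simp [mix, hj] at this; exact this
    · intro hp j
      by_cases hj : j ∈ K
      · have := hp.1 j; simp [hj] at this; simpa [mix, hj] using this
      · have := hp.2 j; simp [hj] at this; simpa [mix, hj] using this
  rw [Measure.map_apply (measurable_mix K) (MeasurableSet.univ_pi hs), hpre,
    Measure.prod_prod, Measure.pi_pi, Measure.pi_pi, ← Finset.prod_mul_distrib]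
  refine Finset.prod_congr rfl fun j _ => ?_
  by_cases hj : j ∈ K <;> simp [hj]

lemma integrable_of_bound {E' : Type*} [NormedAddCommGroup E'] {μ : Measure (∀ j, Ω j)}
    [IsFiniteMeasure μ] (g : (∀ j, Ω j) → E') (hg : AEStronglyMeasurable g μ) (C : ℝ)
    (hb : ∀ x, ‖g x‖ ≤ C) : Integrable g μ :=
  Integrable.mono' (integrable_const C) hg (Filter.Eventually.of_forall hb)

lemma integral_mix {E' : Type*} [NormedAddCommGroup E'] [NormedSpace ℝ E']
    (K : Finset (Fin m)) {g : (∀ j, Ω j) → E'} (hg : Integrable g π) :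
    ∫ x, g x ∂π = ∫ y, ∫ x, g (mix K y x) ∂π ∂π := by
  have h := measurePreserving_mix (Ω := Ω) K
  have hsm : AEStronglyMeasurable g
      (Measure.map (fun p : (∀ j, Ω j) × (∀ j, Ω j) => mix K p.1 p.2) (Measure.prod π π)) := by
    rw [h.map_eq]; exact hg.aestronglyMeasurable
  have hint : Integrable (fun p : (∀ j, Ω j) × (∀ j, Ω j) => g (mix K p.1 p.2))
      (Measure.prod π π) := (h.integrable_comp hg.aestronglyMeasurable).2 hg
  have hmap := integral_map (f := g) h.measurable.aemeasurable hsm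
  rw [h.map_eq] at hmap
  calc ∫ x, g x ∂π
      = ∫ p : (∀ j, Ω j) × (∀ j, Ω j), g (mix K p.1 p.2) ∂(Measure.prod π π) := hmap
    _ = ∫ y, ∫ x, g (mix K y x) ∂π ∂π := integral_prod _ hint

section depends

variable {α' : Type*}

def DependsOn (g : (∀ j, Ω j) → α') (A : Finset (Fin m)) : Prop :=
  ∀ x y, (∀ j ∈ A, x j = y j) → g x = g y

lemma DependsOn.mix_left {g : (∀ j, Ω j) → α'} {A K : Finset (Fin m)}
    (hg : DependsOn g A) (hAK : A ⊆ K) (y x : ∀ j, Ω j) : g (mix K y x) = g y :=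
  hg _ _ fun j hj => mix_mem (hAK hj) y x

lemma DependsOn.mix_right {g : (∀ j, Ω j) → α'} {A K : Finset (Fin m)}
    (hg : DependsOn g A) (hAK : ∀ j ∈ A, j ∉ K) (y x : ∀ j, Ω j) : g (mix K y x) = g x :=
  hg _ _ fun j hj => mix_not_mem (hAK j hj) y x

end depends

lemma integral_mul_of_disjoint {φ ψ : (∀ j, Ω j) → ℝ} {A B : Finset (Fin m)}
    (hA : DependsOn φ A) (hB : DependsOn ψ B) (hd : ∀ j ∈ B, j ∉ A)
    (hφm : Measurable φ) (hψm : Measurable ψ) (Cφ Cψ : ℝ)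
    (hbφ : ∀ x, ‖φ x‖ ≤ Cφ) (hbψ : ∀ x, ‖ψ x‖ ≤ Cψ) :
    ∫ x, φ x * ψ x ∂π = (∫ x, φ x ∂π) * ∫ x, ψ x ∂π := by
  have hint : Integrable (fun x => φ x * ψ x) π := by
    refine integrable_of_bound _ (hφm.mul hψm).aestronglyMeasurable (Cφ * Cψ) fun x => ?_
    rw [norm_mul]
    exact mul_le_mul (hbφ x) (hbψ x) (norm_nonneg _) ((norm_nonneg _).trans (hbφ x))
  rw [integral_mix A hint]
  have hkey : ∀ y x : ∀ j, Ω j, φ (mix A y x) * ψ (mix A y x) = φ y * ψ x := fun y x => by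
    rw [hA.mix_left (subset_refl A), hB.mix_right hd]
  simp only [hkey]
  simp only [integral_const_mul, integral_mul_const]

lemma integral_if_ne {g : (∀ j, Ω j) → ℂ} (hg : Measurable g) :
    ∫ x, (if g x = 1 then (0:ℝ) else 1) ∂π = (π {x | g x ≠ 1}).toReal := by
  have hms : MeasurableSet {x | g x ≠ 1} := (hg (measurableSet_singleton 1)).compl
  have : (fun x => if g x = 1 then (0:ℝ) else 1)
      = Set.indicator {x | g x ≠ 1} (fun _ => (1:ℝ)) := by
    funext x
    by_cases h : g x = 1 <;> simp [Set.indicator_apply, h]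
  rw [this, integral_indicator_const _ hms]
  simp
  rfl

lemma stronglyMeasurable_inner {E' : Type*} [NormedAddCommGroup E'] [NormedSpace ℝ E']
    [MeasurableSpace E'] [BorelSpace E'] [SecondCountableTopology E']
    (K : Finset (Fin m)) {g : (∀ j, Ω j) → E'} (hg : Measurable g) :
    StronglyMeasurable (fun y => ∫ x, g (mix K y x) ∂π) := by
  have : StronglyMeasurable fun p : (∀ j, Ω j) × (∀ j, Ω j) => g (mix K p.1 p.2) :=
    (hg.comp (measurable_mix K)).stronglyMeasurable
  exact this.integral_prod_right'

lemma pow_one_add_le {a : ℝ} (ha : 0 ≤ a) :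
    ∀ k : ℕ, (k : ℝ) * a ≤ 1/2 → (1+a)^k ≤ 1 + 2*(k:ℝ)*a := by
  intro k
  induction k with
  | zero => simp
  | succ k ih =>
    intro hk
    have hk' : (k : ℝ) * a ≤ 1/2 := by
      have : (k:ℝ) ≤ (k+1 : ℕ) := by push_cast; linarith
      nlinarith [mul_le_mul_of_nonneg_right this ha]
    have h1 := ih hk'
    have hka : (k:ℝ) * a ≤ 1/2 := hk'
    have hpos : (0:ℝ) ≤ 1 + 2*(k:ℝ)*a := by positivity
    calc (1+a)^(k+1) = (1+a)^k * (1+a) := by ring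
      _ ≤ (1 + 2*(k:ℝ)*a) * (1+a) := by
          apply mul_le_mul_of_nonneg_right h1 (by linarith)
      _ ≤ 1 + 2*((k:ℕ)+1 : ℝ)*a := by push_cast at hk ⊢; nlinarith
      _ = 1 + 2*((k+1 : ℕ) : ℝ)*a := by push_cast; ring

lemma prod_le_bound {ι' : Type*} (W : Finset ι') (g : ι' → ℝ) (a : ℝ) (ha : 0 ≤ a)
    (hg0 : ∀ j ∈ W, 0 ≤ g j)
    (hg : ∀ j ∈ W, g j ≤ 1 + a) (k : ℕ) (hk : W.card ≤ k) (hka : (k:ℝ)*a ≤ 1/2) :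
    ∏ j ∈ W, g j ≤ 1 + 2*(k:ℝ)*a := by
  calc ∏ j ∈ W, g j ≤ ∏ _j ∈ W, (1+a) := Finset.prod_le_prod hg0 hg
    _ = (1+a)^W.card := by rw [Finset.prod_const]
    _ ≤ (1+a)^k := pow_le_pow_right₀ (by linarith) hk
    _ ≤ 1 + 2*(k:ℝ)*a := pow_one_add_le ha k hka

lemma prod_one_le_real {ι' : Type*} (W : Finset ι') (g : ι' → ℝ)
    (h : ∀ j ∈ W, 1 ≤ g j) : 1 ≤ ∏ j ∈ W, g j := by
  have := Finset.prod_le_prod (s := W) (f := fun _ => (1:ℝ)) (g := g)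
    (fun j _ => zero_le_one) (fun j hj => by simpa using h j hj)
  simpa using this

lemma prod_subset_le_real {ι' : Type*} [DecidableEq ι'] {W U : Finset ι'} (hsub : W ⊆ U) (g : ι' → ℝ)
    (hg : ∀ j ∈ U, 1 ≤ g j) : ∏ j ∈ W, g j ≤ ∏ j ∈ U, g j := by
  rw [← Finset.prod_sdiff hsub]
  have h1 : 1 ≤ ∏ j ∈ U \ W, g j :=
    prod_one_le_real _ _ fun j hj => hg j (Finset.mem_sdiff.1 hj).1
  have h2 : 0 ≤ ∏ j ∈ W, g j :=
    le_trans zero_le_one (prod_one_le_real _ _ fun j hj => hg j (hsub hj))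
  nlinarith

section ctx

variable {n : ℕ}

structure Ctx (m n : ℕ) (Ω : Fin m → Type*) [∀ j, MeasureSpace (Ω j)] where
  f : Fin n → (∀ j, Ω j) → ℂ
  J : Fin n → Finset (Fin m)
  Δ : ℕ
  μ : Fin n → ℕ
  hmeas : ∀ i, Measurable (f i)
  hdep : ∀ i, ∀ x y : ∀ j, Ω j, (∀ j ∈ J i, x j = y j) → f i x = f i y
  hΔ5 : 5 ≤ Δ
  hNbr : ∀ i, ((Finset.univ.filter fun j => j ≠ i ∧ (J i ∩ J j).Nonempty)).card ≤ Δ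
  hμ1 : ∀ i, (J i).Nonempty → 1 ≤ μ i
  hJμ : ∀ i, μ i = 0 → J i = ∅
  hbound : ∀ i x, ‖f i x‖ ≤ 1 + 1 / (6 * (Δ : ℝ))
  hprob : ∀ i, ((Measure.pi fun j => (volume : Measure (Ω j))) {x | f i x ≠ 1}).toReal
      < (((3 * (Δ : ℝ)) ^ (3 * μ i)))⁻¹

namespace Ctx

variable (C : Ctx m n Ω)

def Nbr (i : Fin n) : Finset (Fin n) :=
  Finset.univ.filter fun j => j ≠ i ∧ (C.J i ∩ C.J j).Nonempty

noncomputable def p (i : Fin n) : ℝ :=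
  ((Measure.pi fun j => (volume : Measure (Ω j))) {x | C.f i x ≠ 1}).toReal

noncomputable def P (S : Finset (Fin n)) : ℂ := ∫ x, ∏ i ∈ S, C.f i x ∂π

noncomputable def T (F : Finset (Fin n)) (K : Finset (Fin m)) : ℝ :=
  ∫ y, ‖∫ x, ∏ i ∈ F, C.f i (mix K y x) ∂π‖ ∂π

def Mset (F : Finset (Fin n)) (K : Finset (Fin m)) : Finset (Fin n) :=
  F.filter fun j => (C.J j ∩ K).Nonempty

noncomputable def κ (i : Fin n) : ℝ := (((3 : ℝ) * C.Δ) ^ (2 * C.μ i))⁻¹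

noncomputable def ψ (i : Fin n) : ℝ := (1 + C.κ i) / (1 - 12 * C.p i)

noncomputable def Ψ (W : Finset (Fin n)) : ℝ := ∏ j ∈ W, C.ψ j

lemma hΔR : (5:ℝ) ≤ (C.Δ : ℝ) := by exact_mod_cast C.hΔ5

lemma p_nonneg (i : Fin n) : 0 ≤ C.p i := ENNReal.toReal_nonneg

lemma p_lt (i : Fin n) : C.p i < (((3 : ℝ) * C.Δ) ^ (3 * C.μ i))⁻¹ := C.hprob i

lemma threeΔ : (15:ℝ) ≤ 3 * (C.Δ:ℝ) := by have := C.hΔR; linarith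

lemma p_le_cube (i : Fin n) (hJ : (C.J i).Nonempty) : C.p i ≤ ((3 * (C.Δ:ℝ)) ^ 3)⁻¹ := by
  have h1 := C.hμ1 i hJ
  have h3 := C.threeΔ
  have hle : ((3:ℝ) * C.Δ) ^ 3 ≤ (3 * (C.Δ:ℝ)) ^ (3 * C.μ i) := by
    apply pow_le_pow_right₀ (by linarith)
    omega
  have h2 := C.p_lt i
  have hpos : (0:ℝ) < (3 * (C.Δ:ℝ)) ^ 3 := by positivity
  have := inv_anti₀ hpos hle
  linarith

lemma p_small (i : Fin n) (hJ : (C.J i).Nonempty) : C.p i ≤ 1/3375 := by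
  have h0 := C.p_le_cube i hJ
  have h3 := C.threeΔ
  have : ((3 * (C.Δ:ℝ)) ^ 3)⁻¹ ≤ 1/3375 := by
    rw [inv_le_comm₀ (by positivity) (by norm_num)]
    calc (1/3375 : ℝ)⁻¹ = 15^3 := by norm_num
      _ ≤ (3 * (C.Δ:ℝ))^3 := by
        apply pow_le_pow_left₀ (by norm_num) h3
  linarith

lemma p_zero (i : Fin n) (hJ : C.J i = ∅) : C.p i = 0 := by
  have hconst : ∀ x y, C.f i x = C.f i y := fun x y => C.hdep i x y (by simp [hJ])
  by_cases hone : ∀ x, C.f i x = 1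
  · have : {x : ∀ j, Ω j | C.f i x ≠ 1} = ∅ := by
      ext x; simp [hone x]
    simp [p, this]
  · push_neg at hone
    obtain ⟨x₀, hx₀⟩ := hone
    have huniv : {x : ∀ j, Ω j | C.f i x ≠ 1} = Set.univ := by
      ext x; simp only [Set.mem_setOf_eq, Set.mem_univ, iff_true]
      rw [hconst x x₀]; exact hx₀
    exfalso
    have h2 := C.p_lt i
    have hone' : (1:ℝ) ≤ (3 * (C.Δ:ℝ)) ^ (3 * C.μ i) :=
      one_le_pow₀ (by have := C.threeΔ; linarith)
    have hinv : ((3 * (C.Δ:ℝ)) ^ (3 * C.μ i))⁻¹ ≤ 1 := by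
      rw [inv_le_one_iff₀]; right; exact hone'
    have hp1 : C.p i = 1 := by
      simp only [p, huniv, measure_univ, ENNReal.toReal_one]
    rw [hp1] at h2
    linarith

end Ctx

end ctx

section basic

variable {n : ℕ} (C : Ctx m n Ω)

namespace Ctx

lemma c1_nonneg : (0:ℝ) ≤ 1 + 1/(6*(C.Δ:ℝ)) := by
  have := C.hΔR; positivity

lemma c1_le : 1 + 1/(6*(C.Δ:ℝ)) ≤ 31/30 := by
  have h := C.hΔR
  have : 1/(6*(C.Δ:ℝ)) ≤ 1/30 := by
    apply div_le_div_of_nonneg_left (by norm_num) (by norm_num) (by linarith)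
  linarith

noncomputable def Cb (_C : Ctx m n Ω) : ℝ := (31/30 : ℝ)^n

lemma Cb_nonneg : (0:ℝ) ≤ C.Cb := by unfold Cb; positivity

lemma measurable_prodf (S : Finset (Fin n)) : Measurable fun x => ∏ i ∈ S, C.f i x :=
  Finset.measurable_prod S fun i _ => C.hmeas i

lemma norm_prodf_le (S : Finset (Fin n)) (x : ∀ j, Ω j) :
    ‖∏ i ∈ S, C.f i x‖ ≤ C.Cb := by
  rw [norm_prod]
  calc ∏ i ∈ S, ‖C.f i x‖ ≤ ∏ _i ∈ S, (31/30 : ℝ) := by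
        apply Finset.prod_le_prod (fun i _ => norm_nonneg _)
        intro i _
        exact (C.hbound i x).trans C.c1_le
    _ = (31/30:ℝ)^S.card := by rw [Finset.prod_const]
    _ ≤ C.Cb := by
        apply pow_le_pow_right₀ (by norm_num)
        simpa using Finset.card_le_univ S

lemma dep_prodf (S : Finset (Fin n)) :
    DependsOn (fun x => ∏ i ∈ S, C.f i x) (S.biUnion C.J) := by
  intro x y hxy
  refine Finset.prod_congr rfl fun i hi => ?_
  exact C.hdep i x y fun j hj => hxy j (Finset.mem_biUnion.2 ⟨i, hi, hj⟩)

lemma integrable_prodf (S : Finset (Fin n)) :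
    Integrable (fun x => ∏ i ∈ S, C.f i x) π :=
  integrable_of_bound _ (C.measurable_prodf S).aestronglyMeasurable C.Cb (C.norm_prodf_le S)

lemma normP_le (S : Finset (Fin n)) : ‖C.P S‖ ≤ C.Cb := by
  have h := norm_integral_le_of_norm_le_const (μ := π)
    (f := fun x => ∏ i ∈ S, C.f i x) (C := C.Cb)
    (Filter.Eventually.of_forall (C.norm_prodf_le S))
  simpa [measure_univ, P] using h

lemma P_empty : C.P (∅ : Finset (Fin n)) = 1 := by
  simp [P]

lemma T_nonneg (F : Finset (Fin n)) (K : Finset (Fin m)) : 0 ≤ C.T F K :=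
  integral_nonneg fun y => norm_nonneg _

lemma prodf_mix_eq (F : Finset (Fin n)) (K : Finset (Fin m))
    (h : ∀ j ∈ F, C.J j ∩ K = ∅) (y x : ∀ j, Ω j) :
    ∏ i ∈ F, C.f i (mix K y x) = ∏ i ∈ F, C.f i x := by
  refine Finset.prod_congr rfl fun i hi => ?_
  refine C.hdep i _ _ fun j hj => mix_not_mem (fun hjK => ?_) y x
  have : j ∈ C.J i ∩ K := Finset.mem_inter.2 ⟨hj, hjK⟩
  simp [h i hi] at this

lemma T_no_contam (F : Finset (Fin n)) (K : Finset (Fin m))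
    (h : C.Mset F K = ∅) : C.T F K = ‖C.P F‖ := by
  have hJK : ∀ j ∈ F, C.J j ∩ K = ∅ := by
    intro j hj
    by_contra hne
    have : j ∈ C.Mset F K := Finset.mem_filter.2 ⟨hj,
      Finset.nonempty_iff_ne_empty.2 hne⟩
    simp [h] at this
  have : ∀ y : ∀ j, Ω j, (∫ x, ∏ i ∈ F, C.f i (mix K y x) ∂π) = C.P F := by
    intro y
    rw [show (fun x => ∏ i ∈ F, C.f i (mix K y x)) = fun x => ∏ i ∈ F, C.f i x from
      funext fun x => C.prodf_mix_eq F K hJK y x]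
    rfl
  unfold T
  simp only [this]
  simp [measure_univ]

lemma mem_Nbr {i j : Fin n} : j ∈ C.Nbr i ↔ j ≠ i ∧ (C.J i ∩ C.J j).Nonempty := by
  simp [Nbr]

lemma J_inter_empty_of_not_nbr {i j : Fin n} (h : j ∉ C.Nbr i) (hne : j ≠ i) :
    C.J i ∩ C.J j = ∅ := by
  rw [C.mem_Nbr] at h
  push_neg at h
  exact h hne

lemma J_nonempty_of_nbr {i j : Fin n} (h : j ∈ C.Nbr i) : (C.J j).Nonempty := by
  rw [C.mem_Nbr] at h
  obtain ⟨u, hu⟩ := h.2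
  exact ⟨u, (Finset.mem_inter.1 hu).2⟩

lemma J_nonempty_of_mset {F K} {j : Fin n} (h : j ∈ C.Mset F K) : (C.J j).Nonempty := by
  rw [Mset, Finset.mem_filter] at h
  obtain ⟨u, hu⟩ := h.2
  exact ⟨u, (Finset.mem_inter.1 hu).1⟩

lemma denom_pos (i : Fin n) (hJ : (C.J i).Nonempty) : 0 < 1 - 12 * C.p i := by
  have := C.p_small i hJ; linarith

lemma κ_nonneg (i : Fin n) : 0 ≤ C.κ i := by
  unfold κ
  exact inv_nonneg.2 (by positivity)

lemma one_le_ψ (i : Fin n) (hJ : (C.J i).Nonempty) : 1 ≤ C.ψ i := by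
  unfold ψ
  rw [le_div_iff₀ (C.denom_pos i hJ)]
  have h1 := C.κ_nonneg i
  have h2 := C.p_nonneg i
  linarith

lemma κ_le (i : Fin n) (hJ : (C.J i).Nonempty) : C.κ i ≤ (9 * (C.Δ:ℝ)^2)⁻¹ := by
  have h1 := C.hμ1 i hJ
  have h3 := C.threeΔ
  unfold κ
  have hle : (9:ℝ) * (C.Δ:ℝ)^2 ≤ (3 * (C.Δ:ℝ)) ^ (2 * C.μ i) := by
    calc (9:ℝ) * (C.Δ:ℝ)^2 = (3 * (C.Δ:ℝ))^2 := by ring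
      _ ≤ (3 * (C.Δ:ℝ)) ^ (2 * C.μ i) := by
          apply pow_le_pow_right₀ (by linarith)
          omega
  refine inv_anti₀ ?_ hle
  have := C.hΔR
  positivity

lemma κ_ge_12p (i : Fin n) (hJ : (C.J i).Nonempty) : 12 * C.p i ≤ C.κ i := by
  have h1 := C.hμ1 i hJ
  have h3 := C.threeΔ
  have hbase : (1:ℝ) ≤ 3 * (C.Δ:ℝ) := by linarith
  have hA : (15:ℝ) ≤ (3 * (C.Δ:ℝ)) ^ C.μ i := by
    calc (15:ℝ) ≤ 3 * (C.Δ:ℝ) := h3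
      _ = (3 * (C.Δ:ℝ))^1 := (pow_one _).symm
      _ ≤ (3 * (C.Δ:ℝ)) ^ C.μ i := pow_le_pow_right₀ hbase h1
  have hB : (0:ℝ) < (3 * (C.Δ:ℝ)) ^ (2 * C.μ i) := by positivity
  have hsplit : (3 * (C.Δ:ℝ)) ^ (3 * C.μ i)
      = (3 * (C.Δ:ℝ)) ^ C.μ i * (3 * (C.Δ:ℝ)) ^ (2 * C.μ i) := by
    rw [← pow_add]
    congr 1
    omega
  have hp := (C.p_lt i).le
  unfold κ
  rw [hsplit, mul_inv] at hp
  set A := (3 * (C.Δ:ℝ)) ^ C.μ i with hAdef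
  set B := (3 * (C.Δ:ℝ)) ^ (2 * C.μ i) with hBdef
  have hApos : (0:ℝ) < A := by linarith
  have hclaim : 12 * (A⁻¹ * B⁻¹) ≤ B⁻¹ := by
    have hAinv : A⁻¹ ≤ 1/15 := by
      rw [inv_le_comm₀ hApos (by norm_num)]
      simpa using hA
    have hBinv : (0:ℝ) ≤ B⁻¹ := by positivity
    nlinarith
  nlinarith [mul_le_mul_of_nonneg_left hp (by norm_num : (0:ℝ) ≤ 12)]

end Ctx

end basic

section psi

variable {n : ℕ} (C : Ctx m n Ω)

namespace Ctx

lemma ψ_le (i : Fin n) (hJ : (C.J i).Nonempty) :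
    C.ψ i ≤ 1 + (3*(C.Δ:ℝ)^2)⁻¹ := by
  have hκ := C.κ_le i hJ
  have hκ0 := C.κ_nonneg i
  have hp0 := C.p_nonneg i
  have hd := C.denom_pos i hJ
  have ht := C.hΔR
  set t := (C.Δ : ℝ) with htdef
  have hpc : C.p i ≤ (27*t^3)⁻¹ := by
    have := C.p_le_cube i hJ
    have h27 : (3*t)^3 = 27*t^3 := by ring
    rw [h27] at this
    exact this
  set v := (3*t^2)⁻¹ with hvdef
  have hv3 : v * (3*t^2) = 1 := by
    apply inv_mul_cancel₀; positivity
  have hv0 : 0 ≤ v := by positivity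
  have hvle : v ≤ 1/75 := by
    rw [hvdef, inv_le_comm₀ (by positivity) (by norm_num)]
    nlinarith
  have hκv : 3 * C.κ i ≤ v := by
    have h9 : C.κ i * (9*t^2) ≤ 1 := by
      have h0 : (0:ℝ) < 9*t^2 := by positivity
      calc C.κ i * (9*t^2) ≤ (9*t^2)⁻¹ * (9*t^2) := by
            apply mul_le_mul_of_nonneg_right ?_ (le_of_lt h0)
            simpa [htdef] using hκ
        _ = 1 := by field_simp
    nlinarith [sq_nonneg t]
  have hpv : 12 * C.p i ≤ (4/15) * v := by
    have h0 : (0:ℝ) < 27*t^3 := by positivity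
    have h1 : C.p i * (27*t^3) ≤ 1 := by
      calc C.p i * (27*t^3) ≤ (27*t^3)⁻¹ * (27*t^3) := by
            apply mul_le_mul_of_nonneg_right hpc (le_of_lt h0)
        _ = 1 := by field_simp
    -- 12 p ≤ 12/(27 t³) and (4/15) v = 4/(45 t²) ; 12/(27t³) ≤ 4/(45t²) ⟺ 540 t² ≤ 108 t³... 
    -- 12/(27t³) = 4/(9t³); need 4/(9t³) ≤ 4/(45 t²) ⟺ 45 t² ≤ 9 t³ ⟺ 5 ≤ t ✓
    have h2 : 12 * C.p i * (45 * t^3) ≤ (4/15) * v * (45*t^3) := by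
      have hl : 12 * C.p i * (45*t^3) ≤ 20 := by nlinarith
      have hr : (4/15) * v * (45*t^3) = 4 * t := by
        field_simp [hvdef]
        linear_combination 15 * hv3
      rw [hr]
      linarith
    have h3 : (0:ℝ) < 45*t^3 := by positivity
    exact le_of_mul_le_mul_right h2 h3
  rw [ψ, div_le_iff₀ hd]
  have hexp : (1 + v) * (1 - 12 * C.p i) = 1 + v - 12*C.p i - 12*C.p i*v := by ring
  rw [hvdef] at hexp ⊢
  rw [hexp]
  have h12pv : 12*C.p i*(3*t^2)⁻¹ ≤ (4/15)*(1/75) := by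
    calc 12*C.p i*(3*t^2)⁻¹ ≤ ((4/15)*(3*t^2)⁻¹)*(3*t^2)⁻¹ := by
          apply mul_le_mul_of_nonneg_right _ (by positivity)
          simpa [hvdef] using hpv
      _ ≤ (4/15)*(1/75) := by
          have : ((3*t^2)⁻¹ : ℝ) ≤ 1/75 := by simpa [hvdef] using hvle
          nlinarith
  have hκ' : C.κ i ≤ (3*t^2)⁻¹/3 := by
    have : 3 * C.κ i ≤ (3*t^2)⁻¹ := by simpa [hvdef] using hκv
    linarith
  have hp' : 12 * C.p i ≤ (4/15)*(3*t^2)⁻¹ := by simpa [hvdef] using hpv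
  have hvpos : (0:ℝ) ≤ (3*t^2)⁻¹ := by positivity
  nlinarith

lemma one_le_Ψ (W : Finset (Fin n)) (hW : ∀ j ∈ W, (C.J j).Nonempty) : 1 ≤ C.Ψ W := by
  unfold Ψ
  exact prod_one_le_real _ _ fun j hj => C.one_le_ψ j (hW j hj)

lemma Ψ_nonneg (W : Finset (Fin n)) (hW : ∀ j ∈ W, (C.J j).Nonempty) : 0 ≤ C.Ψ W :=
  le_trans zero_le_one (C.one_le_Ψ W hW)

lemma card_fact : ((C.Δ^2 + C.Δ : ℕ) : ℝ) * (3*(C.Δ:ℝ)^2)⁻¹ ≤ 1/2 := by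
  have ht := C.hΔR
  set t := (C.Δ:ℝ)
  have hcast : ((C.Δ^2 + C.Δ : ℕ) : ℝ) = t^2 + t := by push_cast; ring
  rw [hcast]
  have h3 : (0:ℝ) < 3*t^2 := by positivity
  rw [← div_eq_mul_inv, div_le_iff₀ h3]
  nlinarith

lemma Ψ_le_two (W : Finset (Fin n)) (hW : ∀ j ∈ W, (C.J j).Nonempty)
    (hcard : W.card ≤ C.Δ^2 + C.Δ) : C.Ψ W ≤ 2 := by
  have ha : (0:ℝ) ≤ (3*(C.Δ:ℝ)^2)⁻¹ := by have := C.hΔR; positivity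
  have h := prod_le_bound W (fun j => C.ψ j) _ ha
    (fun j hj => le_trans zero_le_one (C.one_le_ψ j (hW j hj)))
    (fun j hj => C.ψ_le j (hW j hj)) (C.Δ^2 + C.Δ) hcard C.card_fact
  have := C.card_fact
  unfold Ψ
  nlinarith

lemma conv_le_ψ (i : Fin n) (hJ : (C.J i).Nonempty) : (1 - 12*C.p i)⁻¹ ≤ C.ψ i := by
  have hd := C.denom_pos i hJ
  have hκ0 := C.κ_nonneg i
  rw [ψ, div_eq_mul_inv]
  calc (1 - 12*C.p i)⁻¹ = 1 * (1 - 12*C.p i)⁻¹ := (one_mul _).symm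
    _ ≤ (1 + C.κ i) * (1 - 12*C.p i)⁻¹ := by
        apply mul_le_mul_of_nonneg_right (by linarith) (by positivity)

lemma conv_le_two (W : Finset (Fin n)) (hW : ∀ j ∈ W, (C.J j).Nonempty)
    (hcard : W.card ≤ C.Δ^2 + C.Δ) : ∏ j ∈ W, (1 - 12*C.p j)⁻¹ ≤ 2 := by
  calc ∏ j ∈ W, (1 - 12*C.p j)⁻¹ ≤ ∏ j ∈ W, C.ψ j := by
        apply Finset.prod_le_prod
        · intro j hj
          have := C.denom_pos j (hW j hj); positivity
        · intro j hj; exact C.conv_le_ψ j (hW j hj)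
    _ = C.Ψ W := rfl
    _ ≤ 2 := C.Ψ_le_two W hW hcard

lemma Ψ_union_le (A B W : Finset (Fin n)) (hsub : W ⊆ A ∪ B)
    (hA : ∀ j ∈ A, (C.J j).Nonempty) (hB : ∀ j ∈ B, (C.J j).Nonempty) :
    C.Ψ W ≤ C.Ψ A * C.Ψ B := by
  have hAB : ∀ j ∈ A ∪ B, (1:ℝ) ≤ C.ψ j := by
    intro j hj
    rcases Finset.mem_union.1 hj with h | h
    · exact C.one_le_ψ j (hA j h)
    · exact C.one_le_ψ j (hB j h)
  calc C.Ψ W ≤ C.Ψ (A ∪ B) := prod_subset_le_real hsub _ hAB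
    _ ≤ C.Ψ A * C.Ψ B := by
        unfold Ψ
        rw [← Finset.union_sdiff_self_eq_union (s := A) (t := B),
          Finset.prod_union Finset.sdiff_disjoint.symm]
        have h1 : ∏ j ∈ B \ A, C.ψ j ≤ ∏ j ∈ B, C.ψ j :=
          prod_subset_le_real Finset.sdiff_subset _
            (fun j hj => hAB j (Finset.mem_union_right _ hj))
        have h2 : (0:ℝ) ≤ ∏ j ∈ A, C.ψ j :=
          le_trans zero_le_one (prod_one_le_real _ _
            (fun j hj => hAB j (Finset.mem_union_left _ hj)))
        exact mul_le_mul_of_nonneg_left h1 h2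

end Ctx

end psi

section peel

variable {n : ℕ} (C : Ctx m n Ω)

namespace Ctx

lemma measurable_mix_left (K : Finset (Fin m)) (y : ∀ j, Ω j) :
    Measurable (fun x : ∀ j, Ω j => mix K y x) :=
  (measurable_mix K).comp (measurable_const.prodMk measurable_id)

lemma normA_le (i : Fin n) (N₀ : Finset (Fin n)) (hN₀ : N₀.card ≤ C.Δ) (v : ∀ j, Ω j) :
    ‖(C.f i v - 1) * ∏ j ∈ N₀, C.f j v‖ ≤ 3 * (if C.f i v = 1 then (0:ℝ) else 1) := by
  by_cases h : C.f i v = 1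
  · simp [h]
  · simp only [h, if_false, mul_one]
    have hΔ := C.hΔR
    have hε : (0:ℝ) ≤ 1/(6*(C.Δ:ℝ)) := by positivity
    have hprod : ‖∏ j ∈ N₀, C.f j v‖ ≤ 4/3 := by
      rw [norm_prod]
      have h1 : ∏ j ∈ N₀, ‖C.f j v‖ ≤ (1 + 1/(6*(C.Δ:ℝ)))^N₀.card := by
        calc ∏ j ∈ N₀, ‖C.f j v‖ ≤ ∏ _j ∈ N₀, (1 + 1/(6*(C.Δ:ℝ))) :=
              Finset.prod_le_prod (fun j _ => norm_nonneg _) (fun j _ => C.hbound j v)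
          _ = (1 + 1/(6*(C.Δ:ℝ)))^N₀.card := Finset.prod_const _
      have h2 : (1 + 1/(6*(C.Δ:ℝ)))^N₀.card ≤ (1 + 1/(6*(C.Δ:ℝ)))^C.Δ :=
        pow_le_pow_right₀ (by linarith) hN₀
      have h3 : (1 + 1/(6*(C.Δ:ℝ)))^C.Δ ≤ 1 + 2*(C.Δ:ℝ)*(1/(6*(C.Δ:ℝ))) := by
        apply pow_one_add_le hε
        rw [mul_one_div]
        rw [div_le_div_iff₀ (by positivity) (by norm_num)]
        linarith
      have h4 : 1 + 2*(C.Δ:ℝ)*(1/(6*(C.Δ:ℝ))) = 4/3 := by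
        rw [mul_one_div]
        rw [mul_div_assoc]
        have : (C.Δ:ℝ)/(6*(C.Δ:ℝ)) = 1/6 := by
          rw [div_eq_iff (by positivity)]
          ring
        rw [this]
        norm_num
      linarith
    have hfi : ‖C.f i v - 1‖ ≤ 2 + 1/30 := by
      have := C.hbound i v
      have hc := C.c1_le
      calc ‖C.f i v - 1‖ ≤ ‖C.f i v‖ + ‖(1:ℂ)‖ := norm_sub_le _ _
        _ ≤ 31/30 + 1 := by
            rw [norm_one]
            linarith
        _ = 2 + 1/30 := by norm_num
    rw [norm_mul]
    calc ‖C.f i v - 1‖ * ‖∏ j ∈ N₀, C.f j v‖ ≤ (2+1/30) * (4/3) := by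
          apply mul_le_mul hfi hprod (norm_nonneg _) (by norm_num)
      _ ≤ 3 := by norm_num

lemma peel (i : Fin n) (F : Finset (Fin n)) (hiF : i ∉ F) (K : Finset (Fin m)) :
    ∫ y, ‖∫ x, (C.f i (mix K y x) - 1) * ∏ j ∈ F, C.f j (mix K y x) ∂π‖ ∂π
      ≤ 3 * C.p i * C.T (F \ C.Nbr i) (K ∪ (C.J i ∪ (F ∩ C.Nbr i).biUnion C.J)) := by
  classical
  set N₀ := F ∩ C.Nbr i with hN₀def
  set F' := F \ C.Nbr i with hF'def
  set L := C.J i ∪ N₀.biUnion C.J with hLdef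
  set K' := K ∪ L with hK'def
  set A : (∀ j, Ω j) → ℂ := fun v => (C.f i v - 1) * ∏ j ∈ N₀, C.f j v with hAdef
  set B : (∀ j, Ω j) → ℂ := fun v => ∫ x, ∏ j ∈ F', C.f j (mix K' v x) ∂π with hBdef
  have hmeasA : Measurable A := ((C.hmeas i).sub measurable_const).mul (C.measurable_prodf N₀)
  have hsmB : StronglyMeasurable B := stronglyMeasurable_inner K' (C.measurable_prodf F')
  have hboundA : ∀ v, ‖A v‖ ≤ 3 * C.Cb := by
    intro v
    rw [hAdef]
    simp only [norm_mul]
    have h1 : ‖C.f i v - 1‖ ≤ 3 := by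
      have := C.hbound i v
      have hc := C.c1_le
      calc ‖C.f i v - 1‖ ≤ ‖C.f i v‖ + ‖(1:ℂ)‖ := norm_sub_le _ _
        _ ≤ 3 := by rw [norm_one]; linarith
    exact mul_le_mul h1 (C.norm_prodf_le N₀ v) (norm_nonneg _) (by norm_num)
  have hboundB : ∀ v, ‖B v‖ ≤ C.Cb := by
    intro v
    rw [hBdef]
    have := norm_integral_le_of_norm_le_const (μ := π)
      (f := fun x => ∏ j ∈ F', C.f j (mix K' v x)) (C := C.Cb)
      (Filter.Eventually.of_forall fun x => C.norm_prodf_le F' _)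
    simpa [measure_univ] using this
  -- decompose the product over F
  have hFsplit : ∀ z : ∀ j, Ω j, (C.f i z - 1) * ∏ j ∈ F, C.f j z
      = A z * ∏ j ∈ F', C.f j z := by
    intro z
    rw [hAdef]
    have hsp : ∏ j ∈ F, C.f j z = (∏ j ∈ N₀, C.f j z) * ∏ j ∈ F', C.f j z := by
      rw [hN₀def, hF'def]
      rw [← Finset.filter_mem_eq_inter, Finset.sdiff_eq_filter]
      exact (Finset.prod_filter_mul_prod_filter_not F (fun j => j ∈ C.Nbr i) _).symm
    rw [hsp]
    ring
  have hdepA : DependsOn A L := by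
    intro v w hvw
    rw [hAdef]
    have h1 : C.f i v = C.f i w := C.hdep i v w fun c hc => hvw c (Finset.mem_union_left _ hc)
    have h2 : ∏ j ∈ N₀, C.f j v = ∏ j ∈ N₀, C.f j w := by
      refine Finset.prod_congr rfl fun j hj => C.hdep j v w fun c hc => hvw c ?_
      exact Finset.mem_union_right _ (Finset.mem_biUnion.2 ⟨j, hj, hc⟩)
    simp only [h1, h2]
  have hstep1 : ∀ y : ∀ j, Ω j,
      (∫ x, (C.f i (mix K y x) - 1) * ∏ j ∈ F, C.f j (mix K y x) ∂π)
        = ∫ u, A (mix K y u) * B (mix K y u) ∂π := by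
    intro y
    have hg : Integrable (fun x => A (mix K y x) * ∏ j ∈ F', C.f j (mix K y x)) π := by
      refine integrable_of_bound _ ?_ (3 * C.Cb * C.Cb) ?_
      · exact ((hmeasA.comp (measurable_mix_left K y)).mul
          ((C.measurable_prodf F').comp (measurable_mix_left K y))).aestronglyMeasurable
      · intro x
        rw [norm_mul]
        have := mul_le_mul (hboundA (mix K y x)) (C.norm_prodf_le F' (mix K y x))
          (norm_nonneg _) (by have := C.Cb_nonneg; positivity)
        linarith
    calc (∫ x, (C.f i (mix K y x) - 1) * ∏ j ∈ F, C.f j (mix K y x) ∂π)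
        = ∫ x, A (mix K y x) * ∏ j ∈ F', C.f j (mix K y x) ∂π := by
          refine integral_congr_ae (Filter.Eventually.of_forall fun x => ?_)
          exact hFsplit (mix K y x)
      _ = ∫ u, ∫ x, A (mix K y (mix L u x)) * ∏ j ∈ F', C.f j (mix K y (mix L u x)) ∂π ∂π :=
          integral_mix L hg
      _ = ∫ u, A (mix K y u) * B (mix K y u) ∂π := by
          refine integral_congr_ae (Filter.Eventually.of_forall fun u => ?_)
          have hmix : ∀ x : ∀ j, Ω j, mix K y (mix L u x) = mix K' (mix K y u) x := fun x => by
            rw [hK'def]; exact mix_assoc K L y u x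
          calc (∫ x, A (mix K y (mix L u x)) * ∏ j ∈ F', C.f j (mix K y (mix L u x)) ∂π)
              = ∫ x, A (mix K y u) * ∏ j ∈ F', C.f j (mix K' (mix K y u) x) ∂π := by
                refine integral_congr_ae (Filter.Eventually.of_forall fun x => ?_)
                simp only [hmix x]
                congr 1
                exact hdepA.mix_left Finset.subset_union_right (mix K y u) x
            _ = A (mix K y u) * B (mix K y u) := integral_const_mul _ _
  set Φ : (∀ j, Ω j) → ℝ := fun v => ‖A v‖ * ‖B v‖ with hΦdef
  have hmeasΦ : Measurable Φ := (hmeasA.norm).mul (hsmB.measurable.norm)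
  have hboundΦ : ∀ v, ‖Φ v‖ ≤ 3 * C.Cb * C.Cb := by
    intro v
    rw [hΦdef]
    simp only [norm_mul, norm_norm]
    have := mul_le_mul (hboundA v) (hboundB v) (norm_nonneg _)
      (by have := C.Cb_nonneg; positivity)
    linarith
  have hintΦ : Integrable Φ π := integrable_of_bound _ hmeasΦ.aestronglyMeasurable _ hboundΦ
  have hmeasAB : Measurable fun v => A v * B v := hmeasA.mul hsmB.measurable
  have hstep23 : ∫ y, ‖∫ x, (C.f i (mix K y x) - 1) * ∏ j ∈ F, C.f j (mix K y x) ∂π‖ ∂π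
      ≤ ∫ v, Φ v ∂π := by
    calc ∫ y, ‖∫ x, (C.f i (mix K y x) - 1) * ∏ j ∈ F, C.f j (mix K y x) ∂π‖ ∂π
        = ∫ y, ‖∫ u, A (mix K y u) * B (mix K y u) ∂π‖ ∂π := by
          refine integral_congr_ae (Filter.Eventually.of_forall fun y => ?_)
          exact congrArg (fun z => ‖z‖) (hstep1 y)
      _ ≤ ∫ y, ∫ u, Φ (mix K y u) ∂π ∂π := by
          refine integral_mono ?_ ?_ ?_
          · refine integrable_of_bound _ ?_ (3 * C.Cb * C.Cb) ?_
            · exact ((stronglyMeasurable_inner K hmeasAB).norm).aestronglyMeasurable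
            · intro y
              rw [norm_norm]
              have h := norm_integral_le_of_norm_le_const (μ := π)
                (f := fun u => A (mix K y u) * B (mix K y u)) (C := 3 * C.Cb * C.Cb)
                (Filter.Eventually.of_forall fun u => by
                  rw [norm_mul]
                  have := mul_le_mul (hboundA (mix K y u)) (hboundB (mix K y u))
                    (norm_nonneg _) (by have := C.Cb_nonneg; positivity)
                  linarith)
              simpa [measure_univ] using h
          · refine integrable_of_bound _ ?_ (3 * C.Cb * C.Cb) ?_
            · exact (stronglyMeasurable_inner K hmeasΦ).aestronglyMeasurable
            · intro y
              have h := norm_integral_le_of_norm_le_const (μ := π)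
                (f := fun u => Φ (mix K y u)) (C := 3 * C.Cb * C.Cb)
                (Filter.Eventually.of_forall fun u => hboundΦ (mix K y u))
              simpa [measure_univ] using h
          · intro y
            calc ‖∫ u, A (mix K y u) * B (mix K y u) ∂π‖
                ≤ ∫ u, ‖A (mix K y u) * B (mix K y u)‖ ∂π := norm_integral_le_integral_norm _
              _ = ∫ u, Φ (mix K y u) ∂π := by
                  refine integral_congr_ae (Filter.Eventually.of_forall fun u => ?_)
                  rw [hΦdef]; simp [norm_mul]
      _ = ∫ v, Φ v ∂π := (integral_mix K hintΦ).symm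
  set χ : (∀ j, Ω j) → ℝ := fun v => if C.f i v = 1 then (0:ℝ) else 1 with hχdef
  have hmeasχ : Measurable χ := by
    refine Measurable.ite ?_ measurable_const measurable_const
    exact (C.hmeas i) (measurableSet_singleton 1)
  have hdepχ : DependsOn χ (C.J i) := by
    intro v w hvw
    rw [hχdef]
    simp only
    rw [C.hdep i v w hvw]
  have hdepB : DependsOn (fun v => ‖B v‖) (F'.biUnion C.J) := by
    intro v w hvw
    simp only
    congr 1
    rw [hBdef]
    simp only
    refine integral_congr_ae (Filter.Eventually.of_forall fun x => ?_)
    refine Finset.prod_congr rfl fun j hj => ?_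
    refine C.hdep j _ _ fun c hc => ?_
    by_cases hcK : c ∈ K'
    · rw [mix_mem hcK, mix_mem hcK]
      exact hvw c (Finset.mem_biUnion.2 ⟨j, hj, hc⟩)
    · rw [mix_not_mem hcK, mix_not_mem hcK]
  have hd : ∀ c ∈ F'.biUnion C.J, c ∉ C.J i := by
    intro c hc hci
    obtain ⟨j, hjF', hcj⟩ := Finset.mem_biUnion.1 hc
    have hjF : j ∈ F ∧ j ∉ C.Nbr i := by
      rw [hF'def] at hjF'
      exact Finset.mem_sdiff.1 hjF'
    have hne : j ≠ i := fun h => hiF (h ▸ hjF.1)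
    have hmem : c ∈ C.J i ∩ C.J j := Finset.mem_inter.2 ⟨hci, hcj⟩
    rw [C.J_inter_empty_of_not_nbr hjF.2 hne] at hmem
    simp at hmem
  have hN₀card : N₀.card ≤ C.Δ := by
    rw [hN₀def]
    exact le_trans (Finset.card_le_card Finset.inter_subset_right) (C.hNbr i)
  have hstep4 : ∫ v, Φ v ∂π ≤ 3 * (C.p i * C.T F' K') := by
    have hint2 : Integrable (fun v => 3 * (χ v * ‖B v‖)) π := by
      refine integrable_of_bound _ ?_ (3 * (1 * C.Cb)) ?_
      · exact (measurable_const.mul (hmeasχ.mul hsmB.measurable.norm)).aestronglyMeasurable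
      · intro v
        have hχ1 : ‖χ v‖ ≤ 1 := by
          rw [hχdef]
          by_cases h : C.f i v = 1 <;> simp [h]
        have hB1 : ‖‖B v‖‖ ≤ C.Cb := by
          rw [norm_norm]
          exact hboundB v
        have hCb := C.Cb_nonneg
        calc ‖3 * (χ v * ‖B v‖)‖ = 3 * (‖χ v‖ * ‖‖B v‖‖) := by
              rw [norm_mul, norm_mul]
              norm_num
          _ ≤ 3 * (1 * C.Cb) := by
              have := mul_le_mul hχ1 hB1 (norm_nonneg _) zero_le_one
              linarith
    have hmono : ∀ v, Φ v ≤ 3 * (χ v * ‖B v‖) := by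
      intro v
      rw [hΦdef]
      have h1 : ‖A v‖ ≤ 3 * χ v := by
        have h := C.normA_le i N₀ hN₀card v
        rw [hAdef, hχdef]
        simpa using h
      have h2 : (0:ℝ) ≤ ‖B v‖ := norm_nonneg _
      calc ‖A v‖ * ‖B v‖ ≤ (3 * χ v) * ‖B v‖ := mul_le_mul_of_nonneg_right h1 h2
        _ = 3 * (χ v * ‖B v‖) := by ring
    have hmain := integral_mono hintΦ hint2 hmono
    have heq : ∫ v, 3 * (χ v * ‖B v‖) ∂π = 3 * (C.p i * C.T F' K') := by
      rw [integral_const_mul]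
      congr 1
      have hfact := integral_mul_of_disjoint (A := C.J i) (B := F'.biUnion C.J) hdepχ hdepB hd
        hmeasχ hsmB.measurable.norm 1 C.Cb
        (fun x => by rw [hχdef]; by_cases h : C.f i x = 1 <;> simp [h])
        (fun x => by rw [norm_norm]; exact hboundB x)
      rw [hfact]
      congr 1
      · rw [hχdef]
        rw [integral_if_ne (C.hmeas i)]
        rfl
    linarith [hmain, heq]
  calc ∫ y, ‖∫ x, (C.f i (mix K y x) - 1) * ∏ j ∈ F, C.f j (mix K y x) ∂π‖ ∂π
      ≤ ∫ v, Φ v ∂π := hstep23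
    _ ≤ 3 * (C.p i * C.T F' K') := hstep4
    _ = 3 * C.p i * C.T F' K' := by ring

end Ctx

end peel

section steps

variable {n : ℕ} (C : Ctx m n Ω)

namespace Ctx

lemma one_sub_pos (i : Fin n) : 0 < 1 - 12 * C.p i := by
  by_cases h : (C.J i).Nonempty
  · exact C.denom_pos i h
  · rw [C.p_zero i (Finset.not_nonempty_iff_eq_empty.1 h)]
    norm_num

lemma psi_key (i : Fin n) (hJ : (C.J i).Nonempty) :
    (1 - 12 * C.p i)⁻¹ + 12 * C.p i ≤ C.ψ i := by
  have hd := C.denom_pos i hJ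
  have hκ := C.κ_ge_12p i hJ
  have hp0 := C.p_nonneg i
  rw [ψ, div_eq_mul_inv]
  have key : (1 + 12 * C.p i * (1 - 12 * C.p i)) ≤ 1 + C.κ i := by nlinarith
  calc (1 - 12 * C.p i)⁻¹ + 12 * C.p i
      = (1 + 12 * C.p i * (1 - 12 * C.p i)) * (1 - 12 * C.p i)⁻¹ := by
        field_simp
    _ ≤ (1 + C.κ i) * (1 - 12 * C.p i)⁻¹ := by
        apply mul_le_mul_of_nonneg_right key (by positivity)

lemma P_diff (i : Fin n) (S : Finset (Fin n)) (hiS : i ∈ S) :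
    C.P S - C.P (S.erase i) = ∫ x, (C.f i x - 1) * ∏ j ∈ S.erase i, C.f j x ∂π := by
  have hpt : ∀ x : ∀ j, Ω j, (C.f i x - 1) * ∏ j ∈ S.erase i, C.f j x
      = (∏ j ∈ S, C.f j x) - ∏ j ∈ S.erase i, C.f j x := by
    intro x
    rw [← Finset.mul_prod_erase S _ hiS]
    ring
  rw [P, P, ← integral_sub (C.integrable_prodf S) (C.integrable_prodf (S.erase i))]
  refine integral_congr_ae (Filter.Eventually.of_forall fun x => ?_)
  exact (hpt x).symm

lemma peel0 (i : Fin n) (F : Finset (Fin n)) (hiF : i ∉ F) :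
    ‖∫ x, (C.f i x - 1) * ∏ j ∈ F, C.f j x ∂π‖
      ≤ 3 * C.p i * C.T (F \ C.Nbr i) (C.J i ∪ (F ∩ C.Nbr i).biUnion C.J) := by
  have h := C.peel i F hiF ∅
  have hmix0 : ∀ y x : ∀ j, Ω j, mix ∅ y x = x := fun y x => by
    funext c
    exact mix_not_mem (Finset.notMem_empty c) y x
  simp only [hmix0, Finset.empty_union] at h
  have hconst : ∫ y, ‖∫ x, (C.f i x - 1) * ∏ j ∈ F, C.f j x ∂π‖ ∂π
      = ‖∫ x, (C.f i x - 1) * ∏ j ∈ F, C.f j x ∂π‖ := by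
    rw [integral_const]
    simp [measure_univ]
  rw [hconst] at h
  exact h

lemma Mset_erase (F : Finset (Fin n)) (K : Finset (Fin m)) (j₀ : Fin n) :
    C.Mset (F.erase j₀) K = (C.Mset F K).erase j₀ := by
  unfold Mset
  rw [Finset.filter_erase]

lemma Mset_peel_subset (i : Fin n) (F : Finset (Fin n)) (hiF : i ∉ F) (K : Finset (Fin m)) :
    C.Mset (F \ C.Nbr i) (K ∪ (C.J i ∪ (F ∩ C.Nbr i).biUnion C.J))
      ⊆ C.Mset F K ∪ (F ∩ C.Nbr i).biUnion C.Nbr := by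
  intro j hj
  rw [Mset, Finset.mem_filter] at hj
  obtain ⟨hjF', hjK'⟩ := hj
  obtain ⟨c, hc⟩ := hjK'
  rw [Finset.mem_inter] at hc
  obtain ⟨hcJ, hcK'⟩ := hc
  have hjF : j ∈ F := (Finset.mem_sdiff.1 hjF').1
  have hjN : j ∉ C.Nbr i := (Finset.mem_sdiff.1 hjF').2
  rcases Finset.mem_union.1 hcK' with hcK | hcL
  · refine Finset.mem_union_left _ ?_
    rw [Mset, Finset.mem_filter]
    exact ⟨hjF, ⟨c, Finset.mem_inter.2 ⟨hcJ, hcK⟩⟩⟩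
  · rcases Finset.mem_union.1 hcL with hcJi | hcB
    · exfalso
      have hne : j ≠ i := fun h => hiF (h ▸ hjF)
      have := C.J_inter_empty_of_not_nbr hjN hne
      have hmem : c ∈ C.J i ∩ C.J j := Finset.mem_inter.2 ⟨hcJi, hcJ⟩
      rw [this] at hmem
      simp at hmem
    · obtain ⟨k, hk, hck⟩ := Finset.mem_biUnion.1 hcB
      refine Finset.mem_union_right _ (Finset.mem_biUnion.2 ⟨k, hk, ?_⟩)
      rw [mem_Nbr]
      have hkN : k ∈ C.Nbr i := (Finset.mem_inter.1 hk).2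
      constructor
      · intro hjk
        exact hjN (hjk ▸ hkN)
      · exact ⟨c, Finset.mem_inter.2 ⟨hck, hcJ⟩⟩

lemma card_peel_extra (i : Fin n) (F : Finset (Fin n)) :
    ((F ∩ C.Nbr i).biUnion C.Nbr).card ≤ C.Δ^2 := by
  calc ((F ∩ C.Nbr i).biUnion C.Nbr).card ≤ ∑ k ∈ F ∩ C.Nbr i, (C.Nbr k).card :=
        Finset.card_biUnion_le
    _ ≤ ∑ _k ∈ F ∩ C.Nbr i, C.Δ := Finset.sum_le_sum fun k _ => C.hNbr k
    _ = (F ∩ C.Nbr i).card * C.Δ := by rw [Finset.sum_const, smul_eq_mul]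
    _ ≤ C.Δ * C.Δ := by
        apply Nat.mul_le_mul_right
        exact le_trans (Finset.card_le_card Finset.inter_subset_right) (C.hNbr i)
    _ = C.Δ^2 := (sq C.Δ).symm

end Ctx

end steps

section chain

variable {n : ℕ} (C : Ctx m n Ω)

namespace Ctx

lemma Mset_empty (F : Finset (Fin n)) : C.Mset F ∅ = ∅ := by
  unfold Mset
  refine Finset.filter_false_of_mem fun j _ => ?_
  simp

lemma chain_bound {t : ℕ}
    (Rsm : ∀ S : Finset (Fin n), S.card ≤ t → ∀ i ∈ S,
      ‖C.P S - C.P (S.erase i)‖ ≤ 12 * C.p i * ‖C.P (S.erase i)‖)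
    (S : Finset (Fin n)) (hS : S.card ≤ t) (W : Finset (Fin n)) (hsub : W ⊆ S)
    (hJn : ∀ j ∈ W, (C.J j).Nonempty) (hcard : W.card ≤ C.Δ^2 + C.Δ) :
    ‖C.P (S \ W)‖ ≤ 2 * ‖C.P S‖ := by
  have key : ∀ W : Finset (Fin n), W ⊆ S → (∀ j ∈ W, (C.J j).Nonempty) →
      ‖C.P (S \ W)‖ ≤ (∏ j ∈ W, (1 - 12*C.p j)⁻¹) * ‖C.P S‖ := by
    intro W
    induction W using Finset.induction_on with
    | empty => intro _ _; simp
    | @insert k W hkW ih =>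
      intro hsub hJn
      have hWsub : W ⊆ S := fun a ha => hsub (Finset.mem_insert_of_mem ha)
      have hkS : k ∈ S := hsub (Finset.mem_insert_self k W)
      have hkSW : k ∈ S \ W := Finset.mem_sdiff.2 ⟨hkS, hkW⟩
      have hR := Rsm (S \ W) (le_trans (Finset.card_le_card Finset.sdiff_subset) hS) k hkSW
      have hd := C.denom_pos k (hJn k (Finset.mem_insert_self k W))
      have herase : (S \ W).erase k = S \ insert k W := by
        ext a
        simp only [Finset.mem_erase, Finset.mem_sdiff, Finset.mem_insert]
        tauto
      rw [herase] at hR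
      have h1 : ‖C.P (S \ insert k W)‖ - ‖C.P (S \ W)‖
          ≤ 12 * C.p k * ‖C.P (S \ insert k W)‖ := by
        have htr := norm_sub_norm_le (C.P (S \ insert k W)) (C.P (S \ W))
        have hrev : ‖C.P (S \ insert k W) - C.P (S \ W)‖
            = ‖C.P (S \ W) - C.P (S \ insert k W)‖ := norm_sub_rev _ _
        linarith
      have h3 : ‖C.P (S \ insert k W)‖ ≤ (1-12*C.p k)⁻¹ * ‖C.P (S \ W)‖ := by
        rw [inv_mul_eq_div, le_div_iff₀ hd]
        nlinarith [h1]
      have ihW := ih hWsub fun j hj => hJn j (Finset.mem_insert_of_mem hj)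
      rw [Finset.prod_insert hkW]
      calc ‖C.P (S \ insert k W)‖ ≤ (1-12*C.p k)⁻¹ * ‖C.P (S \ W)‖ := h3
        _ ≤ (1-12*C.p k)⁻¹ * ((∏ j ∈ W, (1-12*C.p j)⁻¹) * ‖C.P S‖) := by
            apply mul_le_mul_of_nonneg_left ihW (by positivity)
        _ = ((1-12*C.p k)⁻¹ * ∏ j ∈ W, (1-12*C.p j)⁻¹) * ‖C.P S‖ := by ring
  have h := key W hsub hJn
  have h2 := C.conv_le_two W hJn hcard
  have hPn : (0:ℝ) ≤ ‖C.P S‖ := norm_nonneg _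
  nlinarith [mul_le_mul_of_nonneg_right h2 hPn]

end Ctx

end chain

section mainind

variable {n : ℕ}

lemma Ctx.main (C : Ctx m n Ω) : ∀ s : ℕ,
    (∀ S : Finset (Fin n), S.card ≤ s → ∀ i ∈ S,
       ‖C.P S - C.P (S.erase i)‖ ≤ 12 * C.p i * ‖C.P (S.erase i)‖)
  ∧ ∀ (F : Finset (Fin n)) (K : Finset (Fin m)), F.card ≤ s →
       C.T F K ≤ C.Ψ (C.Mset F K) * ‖C.P F‖ := by
  intro s
  induction s using Nat.strong_induction_on with
  | h s IH =>
  have Rpart : ∀ S : Finset (Fin n), S.card ≤ s → ∀ i ∈ S,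
      ‖C.P S - C.P (S.erase i)‖ ≤ 12 * C.p i * ‖C.P (S.erase i)‖ := by
    intro S hS i hiS
    have hcard1 : 0 < S.card := Finset.card_pos.2 ⟨i, hiS⟩
    have hs1 : 1 ≤ s := by omega
    have hIH := IH (s-1) (by omega)
    rw [C.P_diff i S hiS]
    set S' := S.erase i with hS'def
    have hiS' : i ∉ S' := Finset.notMem_erase i S
    have hS'card : S'.card ≤ s - 1 := by
      rw [hS'def, Finset.card_erase_of_mem hiS]
      omega
    have hpeel := C.peel0 i S' hiS'
    set F₁ := S' \ C.Nbr i with hF₁def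
    set L₁ := C.J i ∪ (S' ∩ C.Nbr i).biUnion C.J with hL₁def
    have hF₁card : F₁.card ≤ s - 1 :=
      le_trans (Finset.card_le_card Finset.sdiff_subset) hS'card
    have hT := hIH.2 F₁ L₁ (by omega)
    have hMsub : C.Mset F₁ L₁ ⊆ (S' ∩ C.Nbr i).biUnion C.Nbr := by
      have h := C.Mset_peel_subset i S' hiS' ∅
      rw [C.Mset_empty] at h
      simpa using h
    have hE₁J : ∀ j ∈ (S' ∩ C.Nbr i).biUnion C.Nbr, (C.J j).Nonempty := by
      intro j hj
      obtain ⟨k, _, hjk⟩ := Finset.mem_biUnion.1 hj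
      exact C.J_nonempty_of_nbr hjk
    have hΨ2 : C.Ψ (C.Mset F₁ L₁) ≤ 2 := by
      calc C.Ψ (C.Mset F₁ L₁) ≤ C.Ψ ((S' ∩ C.Nbr i).biUnion C.Nbr) :=
            prod_subset_le_real hMsub _ fun j hj => C.one_le_ψ j (hE₁J j hj)
        _ ≤ 2 := C.Ψ_le_two _ hE₁J
              (le_trans (C.card_peel_extra i S') (Nat.le_add_right _ _))
    have hchain : ‖C.P F₁‖ ≤ 2 * ‖C.P S'‖ := by
      have hW : F₁ = S' \ (S' ∩ C.Nbr i) := by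
        ext a
        simp only [hF₁def, Finset.mem_sdiff, Finset.mem_inter]
        tauto
      rw [hW]
      refine C.chain_bound hIH.1 S' hS'card (S' ∩ C.Nbr i) Finset.inter_subset_left
        (fun j hj => C.J_nonempty_of_nbr (Finset.mem_inter.1 hj).2) ?_
      calc (S' ∩ C.Nbr i).card ≤ (C.Nbr i).card :=
            Finset.card_le_card Finset.inter_subset_right
        _ ≤ C.Δ := C.hNbr i
        _ ≤ C.Δ^2 + C.Δ := Nat.le_add_left _ _
    have hPF₁ : (0:ℝ) ≤ ‖C.P F₁‖ := norm_nonneg _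
    have hPS' : (0:ℝ) ≤ ‖C.P S'‖ := norm_nonneg _
    have hp0 := C.p_nonneg i
    have hΨ0 : (0:ℝ) ≤ C.Ψ (C.Mset F₁ L₁) :=
      C.Ψ_nonneg _ fun j hj => C.J_nonempty_of_mset hj
    have hT2 : C.T F₁ L₁ ≤ 4 * ‖C.P S'‖ := by
      calc C.T F₁ L₁ ≤ C.Ψ (C.Mset F₁ L₁) * ‖C.P F₁‖ := hT
        _ ≤ 2 * ‖C.P F₁‖ := mul_le_mul_of_nonneg_right hΨ2 hPF₁
        _ ≤ 2 * (2 * ‖C.P S'‖) := by linarith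
        _ = 4 * ‖C.P S'‖ := by ring
    calc ‖∫ x, (C.f i x - 1) * ∏ j ∈ S', C.f j x ∂π‖ ≤ 3 * C.p i * C.T F₁ L₁ := hpeel
      _ ≤ 3 * C.p i * (4 * ‖C.P S'‖) := by
          apply mul_le_mul_of_nonneg_left hT2 (by positivity)
      _ = 12 * C.p i * ‖C.P S'‖ := by ring
  refine ⟨Rpart, ?_⟩
  intro F K hF
  by_cases hM : C.Mset F K = ∅
  · rw [C.T_no_contam F K hM, hM]
    have h1 : C.Ψ (∅ : Finset (Fin n)) = 1 := by simp [Ctx.Ψ]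
    rw [h1, one_mul]
  · obtain ⟨j₀, hj₀⟩ := Finset.nonempty_iff_ne_empty.2 hM
    have hj₀F : j₀ ∈ F := (Finset.mem_filter.1 hj₀).1
    have hJj₀ : (C.J j₀).Nonempty := C.J_nonempty_of_mset hj₀
    have hcard1 : 0 < F.card := Finset.card_pos.2 ⟨j₀, hj₀F⟩
    have hs1 : 1 ≤ s := by omega
    have hIH := IH (s-1) (by omega)
    set F₀ := F.erase j₀ with hF₀def
    have hj₀F₀ : j₀ ∉ F₀ := Finset.notMem_erase j₀ F
    have hF₀card : F₀.card ≤ s - 1 := by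
      rw [hF₀def, Finset.card_erase_of_mem hj₀F]
      omega
    -- split T F K
    have hpt : ∀ z : ∀ j, Ω j, ∏ j ∈ F, C.f j z
        = (∏ j ∈ F₀, C.f j z) + (C.f j₀ z - 1) * ∏ j ∈ F₀, C.f j z := by
      intro z
      rw [hF₀def, ← Finset.mul_prod_erase F _ hj₀F]
      ring
    have hint1 : ∀ y, Integrable (fun x => ∏ j ∈ F₀, C.f j (mix K y x)) π := fun y =>
      integrable_of_bound _
        (((C.measurable_prodf F₀).comp (measurable_mix_left K y))).aestronglyMeasurable
        C.Cb (fun x => C.norm_prodf_le F₀ _)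
    have hgb : ∀ z : ∀ j, Ω j, ‖(C.f j₀ z - 1) * ∏ j ∈ F₀, C.f j z‖ ≤ 3 * C.Cb := by
      intro z
      rw [norm_mul]
      have h1 : ‖C.f j₀ z - 1‖ ≤ 3 := by
        have := C.hbound j₀ z
        have hc := C.c1_le
        calc ‖C.f j₀ z - 1‖ ≤ ‖C.f j₀ z‖ + ‖(1:ℂ)‖ := norm_sub_le _ _
          _ ≤ 3 := by rw [norm_one]; linarith
      exact mul_le_mul h1 (C.norm_prodf_le F₀ z) (norm_nonneg _) (by norm_num)
    have hmeasg : Measurable fun z => (C.f j₀ z - 1) * ∏ j ∈ F₀, C.f j z :=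
      ((C.hmeas j₀).sub measurable_const).mul (C.measurable_prodf F₀)
    have hint2 : ∀ y, Integrable
        (fun x => (C.f j₀ (mix K y x) - 1) * ∏ j ∈ F₀, C.f j (mix K y x)) π := fun y =>
      integrable_of_bound _
        ((hmeasg.comp (measurable_mix_left K y))).aestronglyMeasurable
        (3 * C.Cb) (fun x => hgb _)
    have hinner : ∀ y, (∫ x, ∏ j ∈ F, C.f j (mix K y x) ∂π)
        = (∫ x, ∏ j ∈ F₀, C.f j (mix K y x) ∂π)
          + ∫ x, (C.f j₀ (mix K y x) - 1) * ∏ j ∈ F₀, C.f j (mix K y x) ∂π := by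
      intro y
      rw [← integral_add (hint1 y) (hint2 y)]
      refine integral_congr_ae (Filter.Eventually.of_forall fun x => ?_)
      exact hpt (mix K y x)
    have hsm1 : StronglyMeasurable fun y => ∫ x, ∏ j ∈ F₀, C.f j (mix K y x) ∂π :=
      stronglyMeasurable_inner K (C.measurable_prodf F₀)
    have hsm2 : StronglyMeasurable fun y =>
        ∫ x, (C.f j₀ (mix K y x) - 1) * ∏ j ∈ F₀, C.f j (mix K y x) ∂π :=
      stronglyMeasurable_inner K hmeasg
    have hb1 : ∀ y, ‖∫ x, ∏ j ∈ F₀, C.f j (mix K y x) ∂π‖ ≤ C.Cb := by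
      intro y
      have h := norm_integral_le_of_norm_le_const (μ := π)
        (f := fun x => ∏ j ∈ F₀, C.f j (mix K y x)) (C := C.Cb)
        (Filter.Eventually.of_forall fun x => C.norm_prodf_le F₀ _)
      simpa [measure_univ] using h
    have hb2 : ∀ y, ‖∫ x, (C.f j₀ (mix K y x) - 1) * ∏ j ∈ F₀, C.f j (mix K y x) ∂π‖
        ≤ 3 * C.Cb := by
      intro y
      have h := norm_integral_le_of_norm_le_const (μ := π)
        (f := fun x => (C.f j₀ (mix K y x) - 1) * ∏ j ∈ F₀, C.f j (mix K y x))
        (C := 3 * C.Cb) (Filter.Eventually.of_forall fun x => hgb _)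
      simpa [measure_univ] using h
    have hi1 : Integrable (fun y => ‖∫ x, ∏ j ∈ F₀, C.f j (mix K y x) ∂π‖) π :=
      integrable_of_bound _ hsm1.norm.aestronglyMeasurable C.Cb
        (fun y => by rw [norm_norm]; exact hb1 y)
    have hi2 : Integrable (fun y =>
        ‖∫ x, (C.f j₀ (mix K y x) - 1) * ∏ j ∈ F₀, C.f j (mix K y x) ∂π‖) π :=
      integrable_of_bound _ hsm2.norm.aestronglyMeasurable (3 * C.Cb)
        (fun y => by rw [norm_norm]; exact hb2 y)
    have hsplit : C.T F K ≤ C.T F₀ K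
        + ∫ y, ‖∫ x, (C.f j₀ (mix K y x) - 1) * ∏ j ∈ F₀, C.f j (mix K y x) ∂π‖ ∂π := by
      have hstep : C.T F K = ∫ y, ‖(∫ x, ∏ j ∈ F₀, C.f j (mix K y x) ∂π)
          + ∫ x, (C.f j₀ (mix K y x) - 1) * ∏ j ∈ F₀, C.f j (mix K y x) ∂π‖ ∂π := by
        refine integral_congr_ae (Filter.Eventually.of_forall fun y => ?_)
        exact congrArg (fun z => ‖z‖) (hinner y)
      rw [hstep]
      calc ∫ y, ‖(∫ x, ∏ j ∈ F₀, C.f j (mix K y x) ∂π)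
            + ∫ x, (C.f j₀ (mix K y x) - 1) * ∏ j ∈ F₀, C.f j (mix K y x) ∂π‖ ∂π
          ≤ ∫ y, (‖∫ x, ∏ j ∈ F₀, C.f j (mix K y x) ∂π‖
            + ‖∫ x, (C.f j₀ (mix K y x) - 1) * ∏ j ∈ F₀, C.f j (mix K y x) ∂π‖) ∂π := by
            refine integral_mono ?_ (hi1.add hi2) ?_
            · refine integrable_of_bound _ ?_ (4 * C.Cb) ?_
              · exact ((hsm1.add hsm2).norm).aestronglyMeasurable
              · intro y
                rw [norm_norm]
                calc ‖(∫ x, ∏ j ∈ F₀, C.f j (mix K y x) ∂π)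
                    + ∫ x, (C.f j₀ (mix K y x) - 1) * ∏ j ∈ F₀, C.f j (mix K y x) ∂π‖
                    ≤ ‖∫ x, ∏ j ∈ F₀, C.f j (mix K y x) ∂π‖
                      + ‖∫ x, (C.f j₀ (mix K y x) - 1) * ∏ j ∈ F₀, C.f j (mix K y x) ∂π‖ :=
                      norm_add_le _ _
                  _ ≤ C.Cb + 3 * C.Cb := add_le_add (hb1 y) (hb2 y)
                  _ = 4 * C.Cb := by ring
            · intro y
              exact norm_add_le _ _
        _ = C.T F₀ K + ∫ y, ‖∫ x, (C.f j₀ (mix K y x) - 1)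
              * ∏ j ∈ F₀, C.f j (mix K y x) ∂π‖ ∂π := integral_add hi1 hi2
    -- Term2 via peel
    have hpeel := C.peel j₀ F₀ hj₀F₀ K
    set F₂ := F₀ \ C.Nbr j₀ with hF₂def
    set K₂ := K ∪ (C.J j₀ ∪ (F₀ ∩ C.Nbr j₀).biUnion C.J) with hK₂def
    have hF₂card : F₂.card ≤ s - 1 :=
      le_trans (Finset.card_le_card Finset.sdiff_subset) hF₀card
    have hTF₂ := hIH.2 F₂ K₂ (by omega)
    -- Ψ bound for F₂
    have hAJ : ∀ j ∈ (C.Mset F K).erase j₀, (C.J j).Nonempty := fun j hj =>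
      C.J_nonempty_of_mset (Finset.mem_of_mem_erase hj)
    have hE₂J : ∀ j ∈ (F₀ ∩ C.Nbr j₀).biUnion C.Nbr, (C.J j).Nonempty := by
      intro j hj
      obtain ⟨k, _, hjk⟩ := Finset.mem_biUnion.1 hj
      exact C.J_nonempty_of_nbr hjk
    have hMsub₂ : C.Mset F₂ K₂ ⊆ ((C.Mset F K).erase j₀) ∪ (F₀ ∩ C.Nbr j₀).biUnion C.Nbr := by
      have h := C.Mset_peel_subset j₀ F₀ hj₀F₀ K
      rw [C.Mset_erase] at h
      exact h
    have hΨ₂ : C.Ψ (C.Mset F₂ K₂) ≤ C.Ψ ((C.Mset F K).erase j₀) * 2 := by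
      calc C.Ψ (C.Mset F₂ K₂)
          ≤ C.Ψ ((C.Mset F K).erase j₀) * C.Ψ ((F₀ ∩ C.Nbr j₀).biUnion C.Nbr) :=
            C.Ψ_union_le _ _ _ hMsub₂ hAJ hE₂J
        _ ≤ C.Ψ ((C.Mset F K).erase j₀) * 2 := by
            apply mul_le_mul_of_nonneg_left
              (C.Ψ_le_two _ hE₂J (le_trans (C.card_peel_extra j₀ F₀) (Nat.le_add_right _ _)))
              (C.Ψ_nonneg _ hAJ)
    -- chain for F₂
    have hchain₂ : ‖C.P F₂‖ ≤ 2 * ‖C.P F‖ := by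
      have hW : F₂ = F \ (insert j₀ (F₀ ∩ C.Nbr j₀)) := by
        ext a
        simp only [hF₂def, hF₀def, Finset.mem_sdiff, Finset.mem_insert, Finset.mem_inter,
          Finset.mem_erase]
        tauto
      rw [hW]
      refine C.chain_bound Rpart F hF (insert j₀ (F₀ ∩ C.Nbr j₀)) ?_ ?_ ?_
      · intro a ha
        rcases Finset.mem_insert.1 ha with h | h
        · exact h ▸ hj₀F
        · exact Finset.mem_of_mem_erase (Finset.mem_inter.1 h).1
      · intro j hj
        rcases Finset.mem_insert.1 hj with h | h
        · exact h ▸ hJj₀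
        · exact C.J_nonempty_of_nbr (Finset.mem_inter.1 h).2
      · calc (insert j₀ (F₀ ∩ C.Nbr j₀)).card ≤ (F₀ ∩ C.Nbr j₀).card + 1 :=
              Finset.card_insert_le _ _
          _ ≤ C.Δ + 1 := by
              have : (F₀ ∩ C.Nbr j₀).card ≤ C.Δ :=
                le_trans (Finset.card_le_card Finset.inter_subset_right) (C.hNbr j₀)
              omega
          _ ≤ C.Δ^2 + C.Δ := by
              have h5 := C.hΔ5
              nlinarith
    -- Term1 bound
    have hR := Rpart F hF j₀ hj₀F
    have hd := C.denom_pos j₀ hJj₀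
    have hPF₀ : ‖C.P F₀‖ ≤ (1 - 12 * C.p j₀)⁻¹ * ‖C.P F‖ := by
      have htr := norm_sub_norm_le (C.P F₀) (C.P F)
      have hrev : ‖C.P F₀ - C.P F‖ = ‖C.P F - C.P F₀‖ := norm_sub_rev _ _
      rw [inv_mul_eq_div, le_div_iff₀ hd]
      nlinarith [hR]
    have hT₀ := hIH.2 F₀ K (by omega)
    rw [C.Mset_erase] at hT₀
    -- assemble
    have hΨa0 : (0:ℝ) ≤ C.Ψ ((C.Mset F K).erase j₀) := C.Ψ_nonneg _ hAJ
    have hPF0 : (0:ℝ) ≤ ‖C.P F‖ := norm_nonneg _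
    have hPF₂0 : (0:ℝ) ≤ ‖C.P F₂‖ := norm_nonneg _
    have hp₀0 := C.p_nonneg j₀
    have hκ₀ := C.κ_ge_12p j₀ hJj₀
    have hΨM : C.Ψ (C.Mset F K) = C.ψ j₀ * C.Ψ ((C.Mset F K).erase j₀) := by
      unfold Ctx.Ψ
      exact (Finset.mul_prod_erase _ _ hj₀).symm
    have hterm2 : ∫ y, ‖∫ x, (C.f j₀ (mix K y x) - 1)
        * ∏ j ∈ F₀, C.f j (mix K y x) ∂π‖ ∂π
        ≤ 12 * C.p j₀ * (C.Ψ ((C.Mset F K).erase j₀) * ‖C.P F‖) := by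
      calc ∫ y, ‖∫ x, (C.f j₀ (mix K y x) - 1) * ∏ j ∈ F₀, C.f j (mix K y x) ∂π‖ ∂π
          ≤ 3 * C.p j₀ * C.T F₂ K₂ := hpeel
        _ ≤ 3 * C.p j₀ * (C.Ψ (C.Mset F₂ K₂) * ‖C.P F₂‖) := by
            apply mul_le_mul_of_nonneg_left hTF₂ (by positivity)
        _ ≤ 3 * C.p j₀ * ((C.Ψ ((C.Mset F K).erase j₀) * 2) * (2 * ‖C.P F‖)) := by
            apply mul_le_mul_of_nonneg_left ?_ (by positivity)
            apply mul_le_mul hΨ₂ hchain₂ hPF₂0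
            positivity
        _ = 12 * C.p j₀ * (C.Ψ ((C.Mset F K).erase j₀) * ‖C.P F‖) := by ring
    have hterm1 : C.T F₀ K ≤ C.Ψ ((C.Mset F K).erase j₀) * ((1 - 12 * C.p j₀)⁻¹ * ‖C.P F‖) := by
      calc C.T F₀ K ≤ C.Ψ ((C.Mset F K).erase j₀) * ‖C.P F₀‖ := hT₀
        _ ≤ C.Ψ ((C.Mset F K).erase j₀) * ((1 - 12 * C.p j₀)⁻¹ * ‖C.P F‖) :=
            mul_le_mul_of_nonneg_left hPF₀ hΨa0
    have hψkey := C.psi_key j₀ hJj₀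
    calc C.T F K ≤ C.T F₀ K + ∫ y, ‖∫ x, (C.f j₀ (mix K y x) - 1)
          * ∏ j ∈ F₀, C.f j (mix K y x) ∂π‖ ∂π := hsplit
      _ ≤ C.Ψ ((C.Mset F K).erase j₀) * ((1 - 12 * C.p j₀)⁻¹ * ‖C.P F‖)
          + 12 * C.p j₀ * (C.Ψ ((C.Mset F K).erase j₀) * ‖C.P F‖) :=
          add_le_add hterm1 hterm2
      _ = C.Ψ ((C.Mset F K).erase j₀) * ‖C.P F‖ * ((1 - 12 * C.p j₀)⁻¹ + 12 * C.p j₀) := by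
          ring
      _ ≤ C.Ψ ((C.Mset F K).erase j₀) * ‖C.P F‖ * C.ψ j₀ := by
          apply mul_le_mul_of_nonneg_left hψkey (by positivity)
      _ = C.Ψ (C.Mset F K) * ‖C.P F‖ := by
          rw [hΨM]
          ring

end mainind

section final

variable {n : ℕ}

lemma Ctx.lower (C : Ctx m n Ω) :
    ∀ S : Finset (Fin n), ∏ j ∈ S, (1 - 12 * C.p j) ≤ ‖C.P S‖ := by
  intro S
  induction S using Finset.induction_on with
  | empty => simp [Ctx.P_empty]
  | @insert i S hiS ih =>
    have hcard : (insert i S).card ≤ n := by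
      have := Finset.card_le_univ (insert i S)
      simpa using this
    have hR := (C.main n).1 (insert i S) hcard i (Finset.mem_insert_self i S)
    rw [Finset.erase_insert hiS] at hR
    have htr := norm_sub_norm_le (C.P S) (C.P (insert i S))
    have hrev : ‖C.P S - C.P (insert i S)‖ = ‖C.P (insert i S) - C.P S‖ := norm_sub_rev _ _
    have hprod0 : (0:ℝ) ≤ ∏ j ∈ S, (1 - 12*C.p j) :=
      Finset.prod_nonneg fun j _ => (C.one_sub_pos j).le
    have h2 : (1 - 12*C.p i) * ∏ j ∈ S, (1-12*C.p j) ≤ (1-12*C.p i) * ‖C.P S‖ :=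
      mul_le_mul_of_nonneg_left ih (C.one_sub_pos i).le
    rw [Finset.prod_insert hiS]
    nlinarith [hR]

theorem Ctx.nonzero (C : Ctx m n Ω) : C.P Finset.univ ≠ 0 := by
  have hlow := C.lower Finset.univ
  have hpos : (0:ℝ) < ∏ j ∈ Finset.univ, (1 - 12 * C.p j) :=
    Finset.prod_pos fun j _ => C.one_sub_pos j
  intro h
  rw [h, norm_zero] at hlow
  linarith

end final

end S17

open MeasureTheory

theorem stmt_17 (m n : ℕ) (Ω : Fin m → Type*)
    [∀ j, MeasureSpace (Ω j)] [∀ j, IsProbabilityMeasure (volume : Measure (Ω j))]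
    (f : Fin n → (∀ j, Ω j) → ℂ) (hmeas : ∀ i, Measurable (f i))
    (r D : Fin n → ℕ) (J : Fin n → Finset (Fin m))
    -- each `f i` depends on at most `r i` coordinates, witnessed by the set `J i`
    (hdep : ∀ i, ∀ x y : ∀ j, Ω j, (∀ j ∈ J i, x j = y j) → f i x = f i y)
    (hcard : ∀ i, (J i).card ≤ r i)
    -- `f i` shares a coordinate with at most `D i` of the other functions
    (hshare : ∀ i, (Finset.univ.filter fun j => j ≠ i ∧ (J i ∩ J j).Nonempty).card ≤ D i)
    (Δ : ℕ) (hΔ : Δ = max 5 (Finset.univ.sup D))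
    (μ : Fin n → ℕ) (hμ : ∀ i, μ i = min (r i) (D i + 1))
    (hbound : ∀ i x, ‖f i x‖ ≤ 1 + 1 / (6 * (Δ : ℝ)))
    (hprob : ∀ i,
      ((Measure.pi fun j => (volume : Measure (Ω j))) {x | f i x ≠ 1}).toReal <
        (((3 * (Δ : ℝ)) ^ (3 * μ i)))⁻¹) :
    (∫ x, ∏ i : Fin n, f i x ∂Measure.pi fun j => (volume : Measure (Ω j))) ≠ 0 := by
  have hΔ5 : 5 ≤ Δ := by
    rw [hΔ]
    exact le_max_left _ _
  have hNbr : ∀ i, ((Finset.univ.filter fun j => j ≠ i ∧ (J i ∩ J j).Nonempty)).card ≤ Δ := by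
    intro i
    refine le_trans (hshare i) ?_
    rw [hΔ]
    exact le_trans (Finset.le_sup (Finset.mem_univ i)) (le_max_right _ _)
  have hμ1 : ∀ i, (J i).Nonempty → 1 ≤ μ i := by
    intro i hne
    rw [hμ i]
    refine le_min ?_ ?_
    · exact le_trans (Finset.card_pos.2 hne) (hcard i)
    · omega
  have hJμ : ∀ i, μ i = 0 → J i = ∅ := by
    intro i h0
    rw [hμ i] at h0
    rcases Nat.min_eq_zero_iff.1 h0 with h | h
    · have : (J i).card = 0 := by
        have := hcard i
        omega
      exact Finset.card_eq_zero.1 this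
    · omega
  exact S17.Ctx.nonzero
    { f := f, J := J, Δ := Δ, μ := μ, hmeas := hmeas, hdep := hdep, hΔ5 := hΔ5,
      hNbr := hNbr, hμ1 := hμ1, hJμ := hJμ, hbound := hbound, hprob := hprob }
end
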